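/- arXiv:1305.1591 — 6 statements merged into one kernel-verified Lean document; each statement's English description precedes it below -/
import Mathlib

section
/- Let X : ℕ → ℝ be a bounded function and let x be a real number with |x| < 1. Then the series ∑_{n=1}^∞ X(n)·log(1 − xⁿ) converges absolutely and ∑_{n=1}^∞ X(n)·log(1 − xⁿ) = −∑_{n=1}^∞ (xⁿ/n)·(∑_{d | n} d·X(d)), where the inner sum runs over the positive divisors d of n. -/
private lemma stmt0_aux (y u v w : ℝ) (hv : v ≠ 0) (hw : w ≠ 0) :
    u * (y / w) = y / (v * w) * (v * u) := by
  field_simp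

/-- For a bounded `X : ℕ → ℝ` and `|x| < 1`, the series
`∑_{n ≥ 1} X n * log (1 - x^n)` converges absolutely, and equals
`-∑_{n ≥ 1} (x^n / n) * ∑_{d ∣ n} d * X d`. -/
theorem stmt0 (X : ℕ → ℝ) (hX : ∃ C : ℝ, ∀ n : ℕ, |X n| ≤ C)
    (x : ℝ) (hx : |x| < 1) :
    Summable (fun n : ℕ => |X (n + 1) * Real.log (1 - x ^ (n + 1))|) ∧
    ∑' n : ℕ, X (n + 1) * Real.log (1 - x ^ (n + 1)) =
      - ∑' n : ℕ, (x ^ (n + 1) / (n + 1 : ℝ)) *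
        ∑ d ∈ (n + 1).divisors, (d : ℝ) * X d := by
  obtain ⟨C, hC⟩ := hX
  have hC0 : 0 ≤ C := (abs_nonneg _).trans (hC 0)
  set a : ℝ := |x| with ha
  have ha0 : 0 ≤ a := abs_nonneg x
  have ha1 : a < 1 := hx
  set F : ℕ × ℕ → ℝ :=
    fun p => X (p.1 + 1) * (x ^ ((p.1 + 1) * (p.2 + 1)) / ((p.2 : ℝ) + 1)) with hF
  -- bound on F
  have hbound : ∀ p : ℕ × ℕ, |F p| ≤ (C * a * a ^ p.1) * a ^ p.2 := by
    rintro ⟨n, m⟩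
    have hm1 : (0 : ℝ) < (m : ℝ) + 1 := by positivity
    have h1 : |F (n, m)| = |X (n + 1)| * (a ^ ((n + 1) * (m + 1)) / ((m : ℝ) + 1)) := by
      rw [hF]; simp [abs_mul, abs_div, abs_pow, abs_of_pos hm1, ← ha]
    have h2 : a ^ ((n + 1) * (m + 1)) / ((m : ℝ) + 1) ≤ a ^ ((n + 1) * (m + 1)) := by
      apply div_le_self (by positivity)
      linarith [Nat.cast_nonneg (α := ℝ) m]
    have h3 : a ^ ((n + 1) * (m + 1)) ≤ a ^ (n + 1 + m) := by
      apply pow_le_pow_of_le_one ha0 ha1.le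
      calc n + 1 + m ≤ n * m + (n + 1 + m) := Nat.le_add_left _ _
        _ = (n + 1) * (m + 1) := by ring
    have h4 : a ^ (n + 1 + m) = a * a ^ n * a ^ m := by
      rw [pow_add, pow_succ]; ring
    calc |F (n, m)| = |X (n + 1)| * (a ^ ((n + 1) * (m + 1)) / ((m : ℝ) + 1)) := h1
      _ ≤ C * a ^ (n + 1 + m) := by
          apply mul_le_mul (hC _) (h2.trans h3) (by positivity) hC0
      _ = (C * a * a ^ n) * a ^ m := by rw [h4]; ring
  have hgeo : Summable fun n : ℕ => a ^ n := summable_geometric_of_lt_one ha0 ha1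
  have hdom : Summable fun p : ℕ × ℕ => (C * a * a ^ p.1) * a ^ p.2 :=
    Summable.mul_of_nonneg (hgeo.mul_left (C * a)) hgeo
      (fun n => by positivity) (fun n => by positivity)
  have hFabs : Summable fun p => |F p| :=
    Summable.of_nonneg_of_le (fun _ => abs_nonneg _) hbound hdom
  have hFsum : Summable F := hFabs.of_abs
  -- row sums
  have hlog : ∀ n : ℕ, HasSum (fun m => F (n, m))
      (X (n + 1) * (-Real.log (1 - x ^ (n + 1)))) := by
    intro n
    have hxn : |x ^ (n + 1)| < 1 := by
      rw [abs_pow]; exact pow_lt_one₀ ha0 ha1 (Nat.succ_ne_zero n)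
    have h := (Real.hasSum_pow_div_log_of_abs_lt_one hxn).mul_left (X (n + 1))
    convert h using 2 with m
    · rfl
    rw [hF]; simp [pow_mul]
  -- absolute convergence (first conjunct)
  have hrowabs : Summable fun n : ℕ => ∑' m, |F (n, m)| := hFabs.prod
  have habs : Summable (fun n : ℕ => |X (n + 1) * Real.log (1 - x ^ (n + 1))|) := by
    apply Summable.of_nonneg_of_le (fun _ => abs_nonneg _) _ hrowabs
    intro n
    have h1 : X (n + 1) * Real.log (1 - x ^ (n + 1)) = -∑' m, F (n, m) := by
      rw [(hlog n).tsum_eq]; ring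
    rw [h1, abs_neg]
    have := norm_tsum_le_tsum_norm (f := fun m => F (n, m))
      (by simpa [Real.norm_eq_abs] using (hFabs.prod_factor n))
    simpa [Real.norm_eq_abs] using this
  refine ⟨habs, ?_⟩
  -- identify the double sum with the tsum over the product
  have hsum1 : ∑' n : ℕ, X (n + 1) * Real.log (1 - x ^ (n + 1)) = -∑' p, F p := by
    rw [Summable.tsum_prod hFsum]
    have : ∀ n : ℕ, X (n + 1) * Real.log (1 - x ^ (n + 1)) = -∑' m, F (n, m) := by
      intro n; rw [(hlog n).tsum_eq]; ring
    simp_rw [this]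
    rw [tsum_neg]
  -- regroup along fibers of g(n,m) = (n+1)(m+1)
  set g : ℕ × ℕ → ℕ := fun p => (p.1 + 1) * (p.2 + 1) with hg
  set G : ℕ → ℝ := fun k => ∑' p : (g ⁻¹' {k}), F p with hG
  have hfib : ∑' k, G k = ∑' p, F p := (hFsum.hasSum.tsum_fiberwise g).tsum_eq
  have hG0 : G 0 = 0 := by
    have : g ⁻¹' {0} = ∅ := by
      ext ⟨n, m⟩; simp [hg]
    rw [hG]; simp [this]
  have hshift : ∑' k, G (k + 1) = ∑' k, G k := by
    apply Function.Injective.tsum_eq (g := fun c : ℕ => c + 1) (add_left_injective 1)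
    intro k hk
    rcases Nat.eq_zero_or_pos k with rfl | hkpos
    · exact absurd hG0 hk
    · exact ⟨k - 1, by simp; omega⟩
  -- compute each fiber sum
  have hGk : ∀ k : ℕ, G (k + 1) =
      (x ^ (k + 1) / ((k : ℝ) + 1)) * ∑ d ∈ (k + 1).divisors, (d : ℝ) * X d := by
    intro k
    have hset : g ⁻¹' {k + 1} =
        ↑((k + 1).divisorsAntidiagonal.image (fun p => (p.1 - 1, p.2 - 1))) := by
      ext ⟨n, m⟩
      simp only [Set.mem_preimage, Set.mem_singleton_iff, Finset.coe_image, Set.mem_image,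
        Finset.mem_coe, Nat.mem_divisorsAntidiagonal, hg]
      constructor
      · rintro h
        exact ⟨(n + 1, m + 1), ⟨h, by omega⟩, by simp⟩
      · rintro ⟨⟨a, b⟩, ⟨hab, -⟩, hpq⟩
        have ha' : a ≠ 0 := by rintro rfl; simp at hab
        have hb' : b ≠ 0 := by rintro rfl; simp at hab
        have h1 : a - 1 = n := by simpa using congrArg Prod.fst hpq
        have h2 : b - 1 = m := by simpa using congrArg Prod.snd hpq
        have ha2 : a = n + 1 := by omega
        have hb2 : b = m + 1 := by omega
        subst ha2; subst hb2
        simpa using hab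
    have hinj : ∀ p ∈ (k + 1).divisorsAntidiagonal, ∀ q ∈ (k + 1).divisorsAntidiagonal,
        (p.1 - 1, p.2 - 1) = (q.1 - 1, q.2 - 1) → p = q := by
      rintro ⟨a, b⟩ hp ⟨c, d⟩ hq h
      rw [Nat.mem_divisorsAntidiagonal] at hp hq
      have ha' : a ≠ 0 := by rintro rfl; simp at hp
      have hb' : b ≠ 0 := by rintro rfl; simp at hp
      have hc' : c ≠ 0 := by rintro rfl; simp at hq
      have hd' : d ≠ 0 := by rintro rfl; simp at hq
      have h1 := congrArg Prod.fst h
      have h2 := congrArg Prod.snd h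
      simp only [Prod.mk.injEq] at h1 h2 ⊢
      omega
    have hGdef : G (k + 1) = ∑' p : (g ⁻¹' {k + 1}), F p := rfl
    rw [hGdef, hset, Finset.tsum_subtype', Finset.sum_image hinj,
      Nat.sum_divisorsAntidiagonal (fun i j => F (i - 1, j - 1))]
    rw [Finset.mul_sum]
    apply Finset.sum_congr rfl
    intro d hd
    rw [Nat.mem_divisors] at hd
    obtain ⟨hdvd, hne⟩ := hd
    have hd0 : d ≠ 0 := by rintro rfl; simp at hdvd
    set e : ℕ := (k + 1) / d with he
    have hde : d * e = k + 1 := Nat.mul_div_cancel' hdvd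
    have he0 : e ≠ 0 := by intro h0; rw [h0, Nat.mul_zero] at hde; omega
    have hd1 : d - 1 + 1 = d := by omega
    have he1 : e - 1 + 1 = e := Nat.succ_pred_eq_of_pos (Nat.pos_of_ne_zero he0)
    have hcast : ((e - 1 : ℕ) : ℝ) + 1 = (e : ℝ) := by exact_mod_cast congrArg (Nat.cast (R := ℝ)) he1
    have hkcast : ((k : ℝ) + 1) = (d : ℝ) * (e : ℝ) := by exact_mod_cast hde.symm
    have hF' : F (d - 1, e - 1) = X d * (x ^ (k + 1) / (e : ℝ)) := by
      rw [hF]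
      simp only [hd1, he1, hcast, hde]
    rw [hF', hkcast]
    have hdR : (d : ℝ) ≠ 0 := Nat.cast_ne_zero.mpr hd0
    have heR : (e : ℝ) ≠ 0 := Nat.cast_ne_zero.mpr he0
    exact stmt0_aux _ _ _ _ hdR heR
  calc ∑' n : ℕ, X (n + 1) * Real.log (1 - x ^ (n + 1)) = -∑' p, F p := hsum1
    _ = -∑' k, G (k + 1) := by rw [hshift, hfib]
    _ = _ := by rw [tsum_congr hGk]
end

section
/- Let X : ℕ → ℝ be a bounded function and let x be a real number with |x| < 1. Then the infinite product ∏_{n=1}^∞ (1 − xⁿ)^{X(n)} (real-power exponents, all bases positive) converges, and ∏_{n=1}^∞ (1 − xⁿ)^{X(n)} = exp(−∑_{n=1}^∞ (xⁿ/n)·∑_{d | n} d·X(d)). In particular, if f is the function defined on (−1,1) by f(x) = ∑_{n=1}^∞ (xⁿ/n)·∑_{d|n} d·X(d), then e^{−f(x)} = ∏_{n=1}^∞ (1 − xⁿ)^{X(n)}. -/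
open Real

/-- For a bounded `X : ℕ → ℝ` and `|x| < 1`, the infinite product
`∏_{n ≥ 1} (1 - x^n) ^ (X n)` (real-power exponents) converges and equals
`exp (-∑_{n ≥ 1} (x^n / n) * ∑_{d ∣ n} d * X d)`.  In particular, if
`f y = ∑_{n ≥ 1} (y^n / n) * ∑_{d ∣ n} d * X d` on `(-1, 1)`, then
`exp (-(f x)) = ∏_{n ≥ 1} (1 - x^n) ^ (X n)`. -/
theorem stmt2 (X : ℕ → ℝ) (hX : ∃ C : ℝ, ∀ n : ℕ, |X n| ≤ C)
    (x : ℝ) (hx : |x| < 1) (f : ℝ → ℝ)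
    (hf : ∀ y : ℝ, |y| < 1 →
      f y = ∑' n : ℕ, (y ^ (n + 1) / (n + 1 : ℝ)) *
        ∑ d ∈ (n + 1).divisors, (d : ℝ) * X d) :
    Multipliable (fun n : ℕ => (1 - x ^ (n + 1)) ^ (X (n + 1))) ∧
    ∏' n : ℕ, (1 - x ^ (n + 1)) ^ (X (n + 1)) =
      Real.exp (- ∑' n : ℕ, (x ^ (n + 1) / (n + 1 : ℝ)) *
        ∑ d ∈ (n + 1).divisors, (d : ℝ) * X d) ∧
    Real.exp (-(f x)) = ∏' n : ℕ, (1 - x ^ (n + 1)) ^ (X (n + 1)) := by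
  obtain ⟨C, hC⟩ := hX
  have hC0 : ∀ n, |X n| ≤ max C 0 := fun n => le_trans (hC n) (le_max_left _ _)
  have hx1 : ∀ n : ℕ, |x ^ (n + 1)| < 1 := by
    intro n
    rw [abs_pow]
    calc |x| ^ (n + 1) ≤ |x| ^ 1 :=
          pow_le_pow_of_le_one (abs_nonneg x) hx.le (Nat.le_add_left 1 n)
      _ = |x| := pow_one _
      _ < 1 := hx
  have hpos : ∀ n : ℕ, 0 < 1 - x ^ (n + 1) := by
    intro n
    have := hx1 n
    have h2 : x ^ (n + 1) < 1 := lt_of_le_of_lt (le_abs_self _) this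
    linarith
  -- the double-index series
  set G : ℕ × ℕ → ℝ := fun p => X (p.1 + 1) * ((x ^ (p.1 + 1)) ^ (p.2 + 1) / (p.2 + 1)) with hGdef
  have hgeo : Summable (fun i : ℕ => ‖|x| ^ i‖) := by
    simpa [abs_of_nonneg (abs_nonneg x), abs_pow] using
      summable_geometric_of_lt_one (abs_nonneg x) hx
  have hmaj : Summable (fun p : ℕ × ℕ => max C 0 * (|x| ^ p.1 * |x| ^ p.2)) :=
    (summable_mul_of_summable_norm hgeo hgeo).mul_left _
  have hG : Summable G := by
    apply Summable.of_norm_bounded hmaj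
    rintro ⟨i, j⟩
    have h1 : ‖G (i, j)‖ = |X (i + 1)| * (|x| ^ ((i + 1) * (j + 1)) / (j + 1)) := by
      simp [hGdef, abs_mul, abs_div, abs_pow, ← pow_mul, Nat.abs_cast,
        abs_of_nonneg (by positivity : (0:ℝ) ≤ (j : ℝ) + 1)]
    rw [h1]
    have h2 : |x| ^ ((i + 1) * (j + 1)) / ((j : ℝ) + 1) ≤ |x| ^ ((i + 1) * (j + 1)) := by
      apply div_le_self (by positivity)
      have : (0 : ℝ) ≤ (j : ℝ) := j.cast_nonneg
      linarith
    have h3 : |x| ^ ((i + 1) * (j + 1)) ≤ |x| ^ (i + j) := by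
      apply pow_le_pow_of_le_one (abs_nonneg x) hx.le
      nlinarith [i.zero_le, j.zero_le]
    calc |X (i + 1)| * (|x| ^ ((i + 1) * (j + 1)) / ((j : ℝ) + 1))
        ≤ max C 0 * |x| ^ (i + j) := by
          apply mul_le_mul (hC0 _) (le_trans h2 h3) (by positivity) (le_max_right _ _)
      _ = max C 0 * (|x| ^ i * |x| ^ j) := by rw [pow_add]
  set S : ℝ := ∑' p, G p with hSdef
  have hS : HasSum G S := hG.hasSum
  -- summing over the second coordinate first gives logarithms
  have hInner : ∀ i : ℕ, HasSum (fun j => G (i, j))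
      (X (i + 1) * (-Real.log (1 - x ^ (i + 1)))) := fun i =>
    (Real.hasSum_pow_div_log_of_abs_lt_one (hx1 i)).mul_left _
  have hOuter : HasSum (fun i => X (i + 1) * (-Real.log (1 - x ^ (i + 1)))) S :=
    hS.prod_fiberwise hInner
  have hLog : HasSum (fun i => X (i + 1) * Real.log (1 - x ^ (i + 1))) (-S) := by
    have := hOuter.neg
    simpa [mul_neg, neg_neg] using this
  have hProd : HasProd (fun n : ℕ => (1 - x ^ (n + 1)) ^ (X (n + 1))) (Real.exp (-S)) := by
    have h := hLog.rexp
    have heq : (Real.exp ∘ fun i => X (i + 1) * Real.log (1 - x ^ (i + 1))) =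
        fun n : ℕ => (1 - x ^ (n + 1)) ^ (X (n + 1)) := by
      funext n
      rw [Function.comp_apply, Real.rpow_def_of_pos (hpos n), mul_comm]
    rwa [heq] at h
  -- summing by fibers of the product map gives the divisor sums
  set q : ℕ × ℕ → ℕ := fun p => (p.1 + 1) * (p.2 + 1) with hqdef
  have hFib : HasSum (fun n : ℕ => ∑' p : q ⁻¹' {n}, G p) S := hS.tsum_fiberwise q
  have hfib0 : (∑' p : q ⁻¹' {0}, G p) = 0 := by
    have : q ⁻¹' {0} = ∅ := by
      ext p
      simp [hqdef]
    rw [this]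
    exact tsum_empty
  have hfibS : ∀ n : ℕ, (∑' p : q ⁻¹' {n + 1}, G p) =
      (x ^ (n + 1) / (n + 1 : ℝ)) * ∑ d ∈ (n + 1).divisors, (d : ℝ) * X d := by
    intro n
    have hset : q ⁻¹' {n + 1} =
        ↑((n + 1).divisorsAntidiagonal.image fun p : ℕ × ℕ => (p.1 - 1, p.2 - 1)) := by
      ext ⟨i, j⟩
      simp only [Set.mem_preimage, Set.mem_singleton_iff, Finset.coe_image, Set.mem_image,
        Finset.mem_coe, hqdef]
      constructor
      · intro h
        exact ⟨(i + 1, j + 1), Nat.mem_divisorsAntidiagonal.mpr ⟨h, n.succ_ne_zero⟩, by simp⟩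
      · rintro ⟨⟨a, b⟩, hab, hpr⟩
        obtain ⟨ha, hb⟩ := Nat.ne_zero_of_mem_divisorsAntidiagonal hab
        have hab' := (Nat.mem_divisorsAntidiagonal.mp hab).1
        simp only [Prod.mk.injEq] at hpr
        obtain ⟨h1, h2⟩ := hpr
        have ha' : a = i + 1 := by omega
        have hb' : b = j + 1 := by omega
        rw [ha', hb'] at hab'
        exact hab'
    rw [hset, Finset.tsum_subtype']
    rw [Finset.sum_image (by
      rintro ⟨a, b⟩ hab ⟨c, d⟩ hcd h
      obtain ⟨ha, hb⟩ := Nat.ne_zero_of_mem_divisorsAntidiagonal hab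
      obtain ⟨hc, hd⟩ := Nat.ne_zero_of_mem_divisorsAntidiagonal hcd
      simp only [Prod.mk.injEq] at h ⊢
      omega)]
    rw [Nat.sum_divisorsAntidiagonal (fun a b => G (a - 1, b - 1))]
    rw [Finset.mul_sum]
    apply Finset.sum_congr rfl
    intro d hd
    have hd' := Nat.mem_divisors.mp hd
    have hd0 : d ≠ 0 := by
      rintro rfl
      exact hd'.2 ((Nat.zero_dvd.mp hd'.1))
    have hd1 : 1 ≤ d := Nat.one_le_iff_ne_zero.mpr hd0
    have hdvd : d ∣ n + 1 := hd'.1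
    have hq1 : 1 ≤ (n + 1) / d :=
      Nat.div_pos (Nat.le_of_dvd (by omega) hdvd) (by omega)
    have hGval : G (d - 1, (n + 1) / d - 1) = X d * (x ^ (n + 1) / ((n + 1 : ℕ) / d : ℕ)) := by
      simp only [hGdef]
      have h1 : d - 1 + 1 = d := by omega
      have h2 : (n + 1) / d - 1 + 1 = (n + 1) / d := by omega
      rw [h1, h2, ← pow_mul, Nat.mul_div_cancel' hdvd]
      push_cast [hq1]
      ring_nf
    rw [hGval]
    have hcast : (((n + 1) / d : ℕ) : ℝ) = ((n + 1 : ℕ) : ℝ) / (d : ℝ) :=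
      Nat.cast_div hdvd (by exact_mod_cast hd0)
    rw [hcast]
    have hdR : (d : ℝ) ≠ 0 := by exact_mod_cast hd0
    have hnR : ((n + 1 : ℕ) : ℝ) ≠ 0 := by positivity
    push_cast at hnR ⊢
    field_simp
  have hW : HasSum (fun n : ℕ => (x ^ (n + 1) / (n + 1 : ℝ)) *
      ∑ d ∈ (n + 1).divisors, (d : ℝ) * X d) S := by
    have h := (hasSum_nat_add_iff (f := fun n : ℕ => ∑' p : q ⁻¹' {n}, G p) 1).mpr
      (by simpa [hfib0] using hFib)
    simpa [hfibS] using h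
  refine ⟨hProd.multipliable, ?_, ?_⟩
  · rw [hProd.tprod_eq, hW.tsum_eq]
  · rw [hf x hx, hW.tsum_eq, hProd.tprod_eq]
end

section
/- Let T be an odd positive integer and let X : ℕ → ℝ be T-periodic (X(n+T) = X(n) for all n ≥ 1) and catoptric in each period, i.e. X(T) = 0 and X(T − j) = X(j) for 1 ≤ j ≤ T − 1. Then for every real x with 0 < x < 1, ∏_{n=1}^∞ (1 − xⁿ)^{X(n)} = ∏_{j=1}^{(T−1)/2} ( ∏_{n=0}^∞ (1 − x^{Tn+j})(1 − x^{Tn+T−j}) )^{X(j)}, where all powers are real powers of positive reals. -/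
open Real

/-- Bound on the log factor. -/
lemma stmt3_log_abs_le (x : ℝ) (hx0 : 0 < x) (hx1 : x < 1) (m : ℕ) (hm : 1 ≤ m) :
    |Real.log (1 - x ^ m)| ≤ x ^ m / (1 - x) := by
  have hxm1 : x ^ m < 1 := pow_lt_one₀ hx0.le hx1 (by omega)
  have hxm0 : 0 < x ^ m := pow_pos hx0 m
  have hpos : 0 < 1 - x ^ m := by linarith
  have hxmx : x ^ m ≤ x := by
    calc x ^ m ≤ x ^ 1 := pow_le_pow_of_le_one hx0.le hx1.le hm
    _ = x := pow_one x
  have hlognp : Real.log (1 - x ^ m) ≤ 0 := Real.log_nonpos (by linarith) (by linarith)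
  have h1 : |Real.log (1 - x ^ m)| = Real.log (1 - x ^ m)⁻¹ := by
    rw [Real.log_inv, abs_of_nonpos hlognp]
  rw [h1]
  calc Real.log (1 - x ^ m)⁻¹ ≤ (1 - x ^ m)⁻¹ - 1 :=
        Real.log_le_sub_one_of_pos (inv_pos.2 hpos)
    _ = x ^ m / (1 - x ^ m) := by field_simp; ring
    _ ≤ x ^ m / (1 - x) := by
        apply div_le_div_of_nonneg_left hxm0.le (by linarith) (by linarith)

/-- Geometric-type summability of the shifted log sequence. -/
lemma stmt3_sumL (x : ℝ) (hx0 : 0 < x) (hx1 : x < 1) (c d : ℕ) (hc : 1 ≤ c) (hd : 1 ≤ d) :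
    Summable (fun n : ℕ => Real.log (1 - x ^ (c * n + d))) := by
  have hgeo : Summable (fun n : ℕ => x ^ (n + 1) / (1 - x)) := by
    have : Summable (fun n : ℕ => x ^ n) := summable_geometric_of_lt_one hx0.le hx1
    have h2 := this.mul_right (x / (1 - x))
    apply h2.congr
    intro n
    rw [pow_succ]
    ring
  refine Summable.of_norm (hgeo.of_nonneg_of_le (fun n => norm_nonneg _) (fun n => ?_))
  have hle : n + 1 ≤ c * n + d := by
    have := Nat.le_mul_of_pos_left n hc
    omega
  calc ‖Real.log (1 - x ^ (c * n + d))‖ ≤ x ^ (c * n + d) / (1 - x) := by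
        simpa using stmt3_log_abs_le x hx0 hx1 _ (by omega)
    _ ≤ x ^ (n + 1) / (1 - x) := by
        apply div_le_div_of_nonneg_right ?_ (by linarith)
        exact pow_le_pow_of_le_one hx0.le hx1.le hle

lemma stmt3_pos (x : ℝ) (hx0 : 0 < x) (hx1 : x < 1) (m : ℕ) (hm : 1 ≤ m) :
    0 < 1 - x ^ m := by
  have : x ^ m < 1 := pow_lt_one₀ hx0.le hx1 (by omega)
  linarith

/-- The agile as an exponential. -/
lemma stmt3_agile (x : ℝ) (hx0 : 0 < x) (hx1 : x < 1) (T j : ℕ) (hj1 : 1 ≤ j) (hjT : j < T) :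
    Real.exp (∑' n : ℕ,
        (Real.log (1 - x ^ (T * n + j)) + Real.log (1 - x ^ (T * n + (T - j))))) =
      ∏' n : ℕ, (1 - x ^ (T * n + j)) * (1 - x ^ (T * n + T - j)) := by
  have hsum : Summable (fun n : ℕ =>
      Real.log (1 - x ^ (T * n + j)) + Real.log (1 - x ^ (T * n + (T - j)))) :=
    (stmt3_sumL x hx0 hx1 T j (by omega) hj1).add
      (stmt3_sumL x hx0 hx1 T (T - j) (by omega) (by omega))
  have hp := hsum.hasSum.rexp
  have heq : (Real.exp ∘ fun n : ℕ =>
      Real.log (1 - x ^ (T * n + j)) + Real.log (1 - x ^ (T * n + (T - j)))) =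
      fun n : ℕ => (1 - x ^ (T * n + j)) * (1 - x ^ (T * n + T - j)) := by
    funext n
    have h1 : 0 < 1 - x ^ (T * n + j) := stmt3_pos x hx0 hx1 _ (by omega)
    have h2 : 0 < 1 - x ^ (T * n + (T - j)) := stmt3_pos x hx0 hx1 _ (by omega)
    have h3 : T * n + T - j = T * n + (T - j) := by omega
    simp only [Function.comp, Real.exp_add, Real.exp_log h1, Real.exp_log h2, h3]
  rw [heq] at hp
  exact hp.tprod_eq.symm

set_option maxHeartbeats 1000000


/-- Let `T` be an odd positive integer and `X : ℕ → ℝ` be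
`T`-periodic and catoptric in each period (`X T = 0`, `X (T - j) = X j` for
`1 ≤ j ≤ T - 1`).  Then for `0 < x < 1`,
`∏_{n ≥ 1} (1 - x^n) ^ (X n) = ∏_{j=1}^{(T-1)/2} [j, T; x] ^ (X j)`, where
`[a, p; x] = ∏_{n ≥ 0} (1 - x^{pn+a}) (1 - x^{pn+p-a})`. -/
theorem stmt3 (T : ℕ) (hTpos : 0 < T) (hTodd : Odd T) (X : ℕ → ℝ)
    (hper : ∀ n : ℕ, 1 ≤ n → X (n + T) = X n)
    (hXT : X T = 0)
    (hcat : ∀ j : ℕ, 1 ≤ j → j ≤ T - 1 → X (T - j) = X j)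
    (x : ℝ) (hx0 : 0 < x) (hx1 : x < 1) :
    ∏' n : ℕ, (1 - x ^ (n + 1)) ^ (X (n + 1)) =
      ∏ j ∈ Finset.Icc 1 ((T - 1) / 2),
        (∏' n : ℕ, (1 - x ^ (T * n + j)) * (1 - x ^ (T * n + T - j))) ^ (X j) := by
  haveI : NeZero T := ⟨hTpos.ne'⟩
  obtain ⟨m, hmT⟩ := hTodd
  have hT2 : T = 2 * m + 1 := by omega
  have hm2 : (T - 1) / 2 = m := by omega
  -- periodic extension
  have hXper : ∀ (q j : ℕ), 1 ≤ j → X (T * q + j) = X j := by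
    intro q
    induction q with
    | zero => intro j hj; simp
    | succ q ih =>
      intro j hj
      have h1 : T * (q + 1) + j = (T * q + j) + T := by ring
      rw [h1, hper _ (by omega)]
      exact ih j hj
  -- bound on X
  set B : ℝ := ∑ j ∈ Finset.Icc 1 T, |X j| with hBdef
  have hXB : ∀ n : ℕ, |X (n + 1)| ≤ B := by
    intro n
    have hmod := Nat.mod_lt n hTpos
    have hdm := Nat.div_add_mod n T
    have h1 : n + 1 = T * (n / T) + (n % T + 1) := by omega
    rw [h1, hXper _ _ (by omega)]
    refine Finset.single_le_sum (f := fun j => |X j|) (fun j _ => abs_nonneg _) ?_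
    rw [Finset.mem_Icc]
    omega
  -- summability of the main series
  have hgeoB : Summable (fun n : ℕ => x ^ (n + 1) / (1 - x) * B) := by
    have h2 := (summable_geometric_of_lt_one hx0.le hx1).mul_right (x / (1 - x) * B)
    apply h2.congr
    intro n
    rw [pow_succ]
    ring
  have hf : Summable (fun n : ℕ => Real.log (1 - x ^ (n + 1)) * X (n + 1)) := by
    refine Summable.of_norm (hgeoB.of_nonneg_of_le (fun n => norm_nonneg _) fun n => ?_)
    rw [Real.norm_eq_abs, abs_mul]
    exact mul_le_mul (stmt3_log_abs_le x hx0 hx1 (n + 1) (by omega)) (hXB n)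
      (abs_nonneg _) (div_nonneg (by positivity) (by linarith))
  -- LHS as an exponential
  have hLHS : ∏' n : ℕ, (1 - x ^ (n + 1)) ^ (X (n + 1)) =
      Real.exp (∑' n : ℕ, Real.log (1 - x ^ (n + 1)) * X (n + 1)) := by
    have hp := hf.hasSum.rexp
    have heq : (Real.exp ∘ fun n : ℕ => Real.log (1 - x ^ (n + 1)) * X (n + 1)) =
        fun n : ℕ => (1 - x ^ (n + 1)) ^ (X (n + 1)) := by
      funext n
      rw [Function.comp_apply, ← Real.rpow_def_of_pos (stmt3_pos x hx0 hx1 _ (by omega))]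
    rw [heq] at hp
    exact hp.tprod_eq
  -- fiberwise summability
  have hA : ∀ j : ℕ, 1 ≤ j → Summable (fun q : ℕ => Real.log (1 - x ^ (T * q + j))) :=
    fun j hj => stmt3_sumL x hx0 hx1 T j (by omega) hj
  -- RHS as an exponential
  have hRHS : ∏ j ∈ Finset.Icc 1 ((T - 1) / 2),
      (∏' n : ℕ, (1 - x ^ (T * n + j)) * (1 - x ^ (T * n + T - j))) ^ (X j) =
      Real.exp (∑ j ∈ Finset.Icc 1 m,
        (∑' n : ℕ, (Real.log (1 - x ^ (T * n + j)) +
          Real.log (1 - x ^ (T * n + (T - j))))) * X j) := by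
    rw [hm2, Real.exp_sum]
    refine Finset.prod_congr rfl fun j hj => ?_
    rw [Finset.mem_Icc] at hj
    rw [← stmt3_agile x hx0 hx1 T j hj.1 (by omega), ← Real.exp_mul]
  rw [hLHS, hRHS]
  congr 1
  -- the main rearrangement of sums
  set G : ℕ → ℝ := fun j => (∑' q : ℕ, Real.log (1 - x ^ (T * q + j))) * X j with hGdef
  set F : Fin T × ℕ → ℝ :=
    fun p => Real.log (1 - x ^ (T * p.2 + ((p.1 : ℕ) + 1))) * X ((p.1 : ℕ) + 1) with hFdef
  set E : Fin T × ℕ ≃ ℕ := (Equiv.prodComm (Fin T) ℕ).trans (Nat.divModEquiv T).symm with hEdef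
  have hEapp : ∀ p : Fin T × ℕ, E p = p.2 * T + (p.1 : ℕ) := fun p => rfl
  have hcomp : (fun n : ℕ => Real.log (1 - x ^ (n + 1)) * X (n + 1)) ∘ E = F := by
    funext p
    have h1 : (p.2 * T + (p.1 : ℕ)) + 1 = T * p.2 + ((p.1 : ℕ) + 1) := by ring
    simp only [Function.comp_apply, hEapp, h1, hFdef]
    rw [hXper _ _ (by omega)]
  have hFsum : Summable F := by
    rw [← hcomp]
    exact E.summable_iff.mpr hf
  have step1 : ∑' n : ℕ, Real.log (1 - x ^ (n + 1)) * X (n + 1) = ∑' p : Fin T × ℕ, F p := by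
    rw [← hcomp]
    exact (E.tsum_eq _).symm
  have hfib : ∀ r : Fin T, Summable (fun q : ℕ => F (r, q)) := by
    intro r
    simp only [hFdef]
    exact (hA ((r : ℕ) + 1) (by omega)).mul_right _
  have step2 : ∑' p : Fin T × ℕ, F p = ∑ r : Fin T, G ((r : ℕ) + 1) := by
    rw [Summable.tsum_prod' hFsum hfib, tsum_fintype]
    refine Finset.sum_congr rfl fun r _ => ?_
    simp only [hFdef, hGdef]
    exact tsum_mul_right
  have step3 : ∑ r : Fin T, G ((r : ℕ) + 1) = ∑ j ∈ Finset.Icc 1 T, G j := by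
    rw [Fin.sum_univ_eq_sum_range (fun i => G (i + 1)) T, ← Finset.Ico_add_one_right_eq_Icc,
      Finset.sum_Ico_eq_sum_range]
    simp [add_comm]
  have step4 : ∑ j ∈ Finset.Icc 1 T, G j = ∑ j ∈ Finset.Icc 1 (T - 1), G j := by
    have h := Finset.sum_Icc_succ_top (a := 1) (b := T - 1) (by omega) G
    rw [Nat.sub_add_cancel hTpos] at h
    rw [h, hGdef]
    simp [hXT]
  have hIoc : ∀ n : ℕ, Finset.Icc 1 n = Finset.Ioc 0 n := fun n => by
    ext a; simp [Finset.mem_Icc, Finset.mem_Ioc]; omega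
  have step5 : ∑ j ∈ Finset.Icc 1 (T - 1), G j =
      ∑ j ∈ Finset.Ioc 0 m, G j + ∑ j ∈ Finset.Ioc m (T - 1), G j := by
    rw [hIoc, Finset.sum_Ioc_consecutive G (Nat.zero_le m) (by omega)]
  have step6 : ∑ j ∈ Finset.Ioc m (T - 1), G j = ∑ i ∈ Finset.Ioc 0 m, G (T - i) := by
    refine Finset.sum_nbij' (fun j => T - j) (fun i => T - i) ?_ ?_ ?_ ?_ ?_
    · intro a ha
      simp only [Finset.mem_Ioc] at ha ⊢
      omega
    · intro a ha
      simp only [Finset.mem_Ioc] at ha ⊢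
      omega
    · intro a ha
      simp only [Finset.mem_Ioc] at ha
      show T - (T - a) = a
      omega
    · intro a ha
      simp only [Finset.mem_Ioc] at ha
      show T - (T - a) = a
      omega
    · intro a ha
      simp only [Finset.mem_Ioc] at ha
      show G a = G (T - (T - a))
      congr 1
      omega
  have step7 : ∑ j ∈ Finset.Ioc 0 m, G j + ∑ i ∈ Finset.Ioc 0 m, G (T - i) =
      ∑ j ∈ Finset.Icc 1 m,
        (∑' n : ℕ, (Real.log (1 - x ^ (T * n + j)) +
          Real.log (1 - x ^ (T * n + (T - j))))) * X j := by
    rw [hIoc, ← Finset.sum_add_distrib]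
    refine Finset.sum_congr rfl fun i hi => ?_
    rw [Finset.mem_Ioc] at hi
    have hi1 : 1 ≤ i := hi.1
    have hiT : i ≤ T - 1 := by omega
    simp only [hGdef]
    rw [hcat i hi1 hiT, Summable.tsum_add (hA i hi1) (hA (T - i) (by omega))]
    ring
  rw [step1, step2, step3, step4, step5, step6, step7]
end

section
/- Let a and p be real numbers with 0 < a < p and let q be real with 0 < q < 1. Then ( ∏_{n=0}^∞ (1 − q^{pn+a})(1 − q^{pn+p−a}) ) · ( ∏_{n=1}^∞ (1 − q^{pn}) ) = ∑_{n=−∞}^∞ (−1)ⁿ q^{(p n² + (p − 2a) n)/2}, where q raised to real exponents is the real power and the bilateral series converges absolutely. -/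
open Finset Filter


noncomputable def gb (u : ℝ) (m k : ℕ) : ℝ :=
  if k ≤ m then (∏ j ∈ Finset.Ico (m - k) m, (1 - u ^ (j + 1))) /
      (∏ j ∈ Finset.range k, (1 - u ^ (j + 1))) else 0

lemma gb_zero (u : ℝ) (m : ℕ) : gb u m 0 = 1 := by
  simp [gb]

lemma gb_of_gt (u : ℝ) {m k : ℕ} (h : m < k) : gb u m k = 0 := by
  simp [gb, Nat.not_le.mpr h]

lemma one_sub_pow_ne (u : ℝ) (hu0 : 0 < u) (hu1 : u < 1) (j : ℕ) :  1 - u ^ (j + 1) ≠ 0 := by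
  have : u ^ (j + 1) < 1 := pow_lt_one₀ hu0.le hu1 (Nat.succ_ne_zero j)
  linarith

lemma pascal (u : ℝ) (hu0 : 0 < u) (hu1 : u < 1) (m k : ℕ) :
    gb u (m + 1) (k + 1) = gb u m (k + 1) + u ^ (m - k) * gb u m k := by
  have hfac := one_sub_pow_ne u hu0 hu1
  rcases lt_or_ge m k with h | hkm
  · rw [gb_of_gt u (by omega), gb_of_gt u (by omega), gb_of_gt u (by omega)]
    ring
  · rcases eq_or_lt_of_le hkm with rfl | hlt
    · -- k = m
      rw [gb_of_gt u (Nat.lt_succ_self k), Nat.sub_self, pow_zero]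
      have h1 : gb u (k + 1) (k + 1) = 1 := by
        rw [gb, if_pos (le_refl _), Nat.sub_self,
          div_eq_one_iff_eq (Finset.prod_ne_zero_iff.2 fun j _ => hfac j),
          Finset.range_eq_Ico]
      have h2 : gb u k k = 1 := by
        rw [gb, if_pos (le_refl _), Nat.sub_self,
          div_eq_one_iff_eq (Finset.prod_ne_zero_iff.2 fun j _ => hfac j),
          Finset.range_eq_Ico]
      rw [h1, h2]; ring
    · -- k < m
      have hk1m : k + 1 ≤ m := hlt
      rw [gb, if_pos (by omega), gb, if_pos hk1m, gb, if_pos hlt.le]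
      set N3 : ℝ := ∏ j ∈ Finset.Ico (m - k) m, (1 - u ^ (j + 1)) with hN3
      set Dk : ℝ := ∏ j ∈ Finset.range k, (1 - u ^ (j + 1)) with hDkdef
      have hD : ∏ j ∈ Finset.range (k + 1), (1 - u ^ (j + 1)) = Dk * (1 - u ^ (k + 1)) := by
        rw [hDkdef, Finset.prod_range_succ]
      have e1 : m + 1 - (k + 1) = m - k := by omega
      have hNum1 : ∏ j ∈ Finset.Ico (m + 1 - (k + 1)) (m + 1), (1 - u ^ (j + 1)) =
          N3 * (1 - u ^ (m + 1)) := by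
        rw [e1, Finset.prod_Ico_succ_top (by omega)]
      have hNum2 : ∏ j ∈ Finset.Ico (m - (k + 1)) m, (1 - u ^ (j + 1)) =
          (1 - u ^ (m - k)) * N3 := by
        rw [Finset.prod_eq_prod_Ico_succ_bot (by omega : m - (k + 1) < m),
          show m - (k + 1) + 1 = m - k by omega]
      rw [hNum1, hNum2, hD]
      have hDk : Dk ≠ 0 := Finset.prod_ne_zero_iff.2 fun j _ => hfac j
      have hx : (1 - u ^ (k + 1)) ≠ 0 := hfac k
      have hpow : u ^ (m - k) * u ^ (k + 1) = u ^ (m + 1) := by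
        rw [← pow_add]; congr 1; omega
      rw [← hpow]
      field_simp
      ring

lemma tri_succ (k : ℕ) : (k + 1) * (k + 1 - 1) / 2 = k * (k - 1) / 2 + k := by
  rcases k with _ | n
  · rfl
  · have h : (n + 1 + 1) * (n + 1 + 1 - 1) = (n + 1) * (n + 1 - 1) + 2 * (n + 1) := by
      simp only [Nat.add_sub_cancel]; ring
    omega

lemma gauss (u t : ℝ) (hu0 : 0 < u) (hu1 : u < 1) (m : ℕ) :
    ∏ j ∈ Finset.range m, (1 + t * u ^ j) =
      ∑ k ∈ Finset.range (m + 1), u ^ (k * (k - 1) / 2) * gb u m k * t ^ k := by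
  induction m with
  | zero => simp [gb_zero]
  | succ m ih =>
    rw [Finset.prod_range_succ, ih]
    rw [Finset.sum_range_succ' (fun k => u ^ (k * (k - 1) / 2) * gb u (m + 1) k * t ^ k) (m + 1)]
    simp only [pascal u hu0 hu1 m]
    have expand : ∀ k ∈ Finset.range (m + 1),
        u ^ ((k + 1) * (k + 1 - 1) / 2) * (gb u m (k + 1) + u ^ (m - k) * gb u m k) * t ^ (k + 1)
        = u ^ ((k + 1) * (k + 1 - 1) / 2) * gb u m (k + 1) * t ^ (k + 1)
          + u ^ m * (u ^ (k * (k - 1) / 2) * gb u m k * t ^ k) * t := by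
      intro k hk
      simp only [Finset.mem_range] at hk
      have h2 : u ^ ((k + 1) * (k + 1 - 1) / 2) * u ^ (m - k) = u ^ m * u ^ (k * (k - 1) / 2) := by
        rw [← pow_add, ← pow_add]
        congr 1
        have := tri_succ k
        omega
      calc u ^ ((k + 1) * (k + 1 - 1) / 2) * (gb u m (k + 1) + u ^ (m - k) * gb u m k) * t ^ (k + 1)
          = u ^ ((k + 1) * (k + 1 - 1) / 2) * gb u m (k + 1) * t ^ (k + 1)
            + (u ^ ((k + 1) * (k + 1 - 1) / 2) * u ^ (m - k)) * gb u m k * t ^ (k + 1) := by ring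
        _ = _ := by rw [h2, pow_succ]; ring
    rw [Finset.sum_congr rfl expand, Finset.sum_add_distrib]
    have hS1 : ∑ k ∈ Finset.range (m + 1),
        u ^ ((k + 1) * (k + 1 - 1) / 2) * gb u m (k + 1) * t ^ (k + 1)
        + u ^ (0 * (0 - 1) / 2) * gb u (m + 1) 0 * t ^ 0
        = ∑ k ∈ Finset.range (m + 1), u ^ (k * (k - 1) / 2) * gb u m k * t ^ k := by
      rw [show gb u (m + 1) 0 = gb u m 0 by rw [gb_zero, gb_zero]]
      rw [← Finset.sum_range_succ' (fun k => u ^ (k * (k - 1) / 2) * gb u m k * t ^ k) (m + 1)]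
      rw [Finset.sum_range_succ, gb_of_gt u (Nat.lt_succ_self m)]
      simp
    rw [add_right_comm, hS1, ← Finset.sum_mul, ← Finset.mul_sum]
    ring

lemma prod_zpow_sum (Q : ℝ) (hQ : Q ≠ 0) (f : ℕ → ℤ) (N : ℕ) :
    ∏ i ∈ Finset.range N, Q ^ f i = Q ^ (∑ i ∈ Finset.range N, f i) := by
  induction N with
  | zero => simp
  | succ n ih => rw [Finset.prod_range_succ, Finset.sum_range_succ, ih, zpow_add₀ hQ]

lemma sum_exp_eq (N : ℕ) : ∑ i ∈ Finset.range N, (2 * (i : ℤ) + 1 - 2 * N) = -(N : ℤ) ^ 2 := by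
  induction N with
  | zero => simp
  | succ n ih =>
    rw [Finset.sum_range_succ]
    have : ∑ i ∈ Finset.range n, (2 * (i : ℤ) + 1 - 2 * (n + 1 : ℕ))
        = (∑ i ∈ Finset.range n, (2 * (i : ℤ) + 1 - 2 * n)) + ∑ i ∈ Finset.range n, (-2 : ℤ) := by
      rw [← Finset.sum_add_distrib]
      refine Finset.sum_congr rfl fun i _ => by push_cast; ring
    rw [this, ih]
    simp only [Finset.sum_const, Finset.card_range]
    push_cast
    ring

lemma finite_jacobi (Q x : ℝ) (hQ0 : 0 < Q) (hQ1 : Q < 1) (hx : 0 < x) (N : ℕ) :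
    (∏ i ∈ Finset.range N, ((1 - x * Q ^ (2 * i + 1)) * (1 - x⁻¹ * Q ^ (2 * i + 1))))
      * ((-1 : ℝ) ^ N * x ^ N) =
    ∑ k ∈ Finset.range (2 * N + 1),
      (-1 : ℝ) ^ k * gb (Q ^ 2) (2 * N) k * Q ^ (((k : ℤ) - N) ^ 2) * x ^ k := by
  have hQne : Q ≠ 0 := ne_of_gt hQ0
  have hxne : x ≠ 0 := ne_of_gt hx
  have hu0 : (0:ℝ) < Q ^ 2 := by positivity
  have hu1 : Q ^ 2 < 1 := by nlinarith
  set t : ℝ := -(x * Q ^ ((1 : ℤ) - 2 * N)) with ht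
  have key := gauss (Q ^ 2) t hu0 hu1 (2 * N)
  set P : ℝ := ∏ i ∈ Finset.range N, ((1 - x * Q ^ (2 * i + 1)) * (1 - x⁻¹ * Q ^ (2 * i + 1)))
    with hP
  set S : ℝ := ∑ k ∈ Finset.range (2 * N + 1),
      (-1 : ℝ) ^ k * gb (Q ^ 2) (2 * N) k * Q ^ (((k : ℤ) - N) ^ 2) * x ^ k with hS
  have hterm : ∀ j : ℕ, 1 + t * (Q ^ 2) ^ j = 1 - x * Q ^ (2 * (j : ℤ) + 1 - 2 * N) := by
    intro j
    have h0 : ((Q ^ 2) ^ j : ℝ) = Q ^ (((2 * j : ℕ) : ℤ)) := by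
      rw [zpow_natCast, ← pow_mul]
    have h4 : Q ^ ((1:ℤ) - 2 * N) * Q ^ (((2 * j : ℕ) : ℤ)) = Q ^ (2 * (j:ℤ) + 1 - 2 * N) := by
      rw [← zpow_add₀ hQne]; congr 1; push_cast; ring
    calc 1 + t * (Q ^ 2) ^ j
        = 1 - x * (Q ^ ((1:ℤ) - 2 * N) * Q ^ (((2 * j : ℕ) : ℤ))) := by rw [ht, h0]; ring
      _ = _ := by rw [h4]
  -- LHS
  have hL : ∏ j ∈ Finset.range (2 * N), (1 + t * (Q ^ 2) ^ j)
      = ((-1 : ℝ) ^ N * x ^ N * Q ^ (-((N : ℤ) ^ 2))) * P := by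
    rw [Finset.prod_congr rfl (fun j _ => hterm j), two_mul, Finset.prod_range_add]
    have hsec : ∀ i ∈ Finset.range N, (1 - x * Q ^ (2 * ((N + i : ℕ) : ℤ) + 1 - 2 * N))
        = 1 - x * Q ^ (2 * i + 1) := by
      intro i _
      rw [show 2 * ((N + i : ℕ) : ℤ) + 1 - 2 * N = ((2 * i + 1 : ℕ) : ℤ) by push_cast; ring,
        zpow_natCast]
    have hfir : ∀ i ∈ Finset.range N, (1 - x * Q ^ (2 * (i : ℤ) + 1 - 2 * N))
        = ((-x) * Q ^ (2 * (i : ℤ) + 1 - 2 * N)) *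
          (1 - x⁻¹ * Q ^ (2 * (((N - 1 - i : ℕ)) : ℤ) + 1)) := by
      intro i hi
      simp only [Finset.mem_range] at hi
      have he : (2 * (((N - 1 - i : ℕ)) : ℤ) + 1) = -(2 * (i : ℤ) + 1 - 2 * N) := by
        have : ((N - 1 - i : ℕ) : ℤ) = (N : ℤ) - 1 - i := by omega
        rw [this]; ring
      rw [he, zpow_neg]
      have hz : Q ^ (2 * (i : ℤ) + 1 - 2 * N) ≠ 0 := zpow_ne_zero _ hQne
      field_simp
      ring
    rw [Finset.prod_congr rfl hsec, Finset.prod_congr rfl hfir, Finset.prod_mul_distrib]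
    have h5 : ∏ i ∈ Finset.range N, ((-x) * Q ^ (2 * (i : ℤ) + 1 - 2 * N))
        = (-1 : ℝ) ^ N * x ^ N * Q ^ (-((N : ℤ) ^ 2)) := by
      rw [Finset.prod_mul_distrib, Finset.prod_const, prod_zpow_sum Q hQne, sum_exp_eq, neg_pow,
        Finset.card_range]
    have h6 : ∏ i ∈ Finset.range N, (1 - x⁻¹ * Q ^ (2 * (((N - 1 - i : ℕ)) : ℤ) + 1))
        = ∏ i ∈ Finset.range N, (1 - x⁻¹ * Q ^ (2 * i + 1)) := by
      have := Finset.prod_range_reflect (fun i => 1 - x⁻¹ * Q ^ (2 * ((i : ℕ) : ℤ) + 1)) N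
      rw [this]
      refine Finset.prod_congr rfl fun i _ => ?_
      rw [show (2 * ((i : ℕ) : ℤ) + 1) = ((2 * i + 1 : ℕ) : ℤ) by push_cast; ring, zpow_natCast]
    rw [h5, h6, hP, Finset.prod_mul_distrib]
    ring
  -- RHS
  have hR : ∑ k ∈ Finset.range (2 * N + 1),
        (Q ^ 2) ^ (k * (k - 1) / 2) * gb (Q ^ 2) (2 * N) k * t ^ k
      = Q ^ (-((N : ℤ) ^ 2)) * S := by
    rw [hS, Finset.mul_sum]
    refine Finset.sum_congr rfl fun k hk => ?_
    have hev : Even (k * (k - 1)) := by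
      rcases k with _ | n
      · simp
      · simpa [Nat.mul_comm, Nat.succ_sub_one] using Nat.even_mul_succ_self n
    obtain ⟨c, hc⟩ := hev
    have h1 : ((Q ^ 2) ^ (k * (k - 1) / 2) : ℝ) = Q ^ (((k * (k - 1) : ℕ) : ℤ)) := by
      rw [zpow_natCast, ← pow_mul]
      congr 1
      omega
    have h2 : t ^ k = (-1 : ℝ) ^ k * x ^ k * Q ^ (((1 : ℤ) - 2 * N) * k) := by
      rw [ht, neg_mul_eq_neg_mul, ← neg_one_mul, mul_pow, mul_pow,
        ← zpow_natCast (Q ^ ((1:ℤ) - 2 * N)) k, ← zpow_mul]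
    have hcast : ((k * (k - 1) : ℕ) : ℤ) = (k : ℤ) ^ 2 - k := by
      rcases k with _ | n
      · simp
      · push_cast [Nat.succ_sub_one]; ring
    have h3 : Q ^ (((k * (k - 1) : ℕ) : ℤ)) * Q ^ (((1 : ℤ) - 2 * N) * k)
        = Q ^ (-((N : ℤ) ^ 2)) * Q ^ (((k : ℤ) - N) ^ 2) := by
      rw [← zpow_add₀ hQne, ← zpow_add₀ hQne]
      congr 1
      rw [hcast]
      ring
    rw [h1, h2]
    calc Q ^ (((k * (k - 1) : ℕ) : ℤ)) * gb (Q ^ 2) (2 * N) k *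
          ((-1:ℝ) ^ k * x ^ k * Q ^ (((1:ℤ) - 2 * N) * k))
        = (Q ^ (((k * (k - 1) : ℕ) : ℤ)) * Q ^ (((1:ℤ) - 2 * N) * k)) * gb (Q ^ 2) (2 * N) k *
          ((-1:ℝ) ^ k * x ^ k) := by ring
      _ = _ := by rw [h3]; ring
  rw [hL, hR] at key
  have hQz : Q ^ (-((N : ℤ) ^ 2)) ≠ 0 := zpow_ne_zero _ hQne
  rw [show ((-1 : ℝ) ^ N * x ^ N * Q ^ (-((N : ℤ) ^ 2))) * P
      = Q ^ (-((N : ℤ) ^ 2)) * (P * ((-1 : ℝ) ^ N * x ^ N)) from by ring] at key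
  exact mul_left_cancel₀ hQz key

lemma geom_pos {c w : ℝ} (hw0 : 0 < w) (hw1 : w < 1) (hc0 : 0 < c) (hc1 : c < 1) (i : ℕ) :
    0 < 1 - c * w ^ i := by
  have h1 : w ^ i ≤ 1 := pow_le_one₀ hw0.le hw1.le
  nlinarith

lemma log_summable {c w : ℝ} (hw0 : 0 < w) (hw1 : w < 1) (hc0 : 0 < c) (hc1 : c < 1) :
    Summable fun i : ℕ => Real.log (1 - c * w ^ i) := by
  have hpos := geom_pos hw0 hw1 hc0 hc1
  refine Summable.of_abs (Summable.of_nonneg_of_le (fun i => abs_nonneg _)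
    (fun i => ?_) (Summable.mul_left (c / (1 - c)) (summable_geometric_of_lt_one hw0.le hw1)))
  have h1 : w ^ i ≤ 1 := pow_le_one₀ hw0.le hw1.le
  have hcw : 0 < c * w ^ i := by positivity
  have hcw1 : c * w ^ i ≤ c := by nlinarith
  have hlogle : Real.log (1 - c * w ^ i) ≤ 0 := Real.log_nonpos (by linarith) (by linarith)
  rw [abs_of_nonpos hlogle]
  have key : -Real.log (1 - c * w ^ i) ≤ (c * w ^ i) / (1 - c * w ^ i) := by
    have := Real.log_le_sub_one_of_pos (x := (1 - c * w ^ i)⁻¹) (inv_pos.mpr (hpos i))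
    rw [Real.log_inv] at this
    have h2 : (1 - c * w ^ i)⁻¹ - 1 = (c * w ^ i) / (1 - c * w ^ i) := by
      rw [eq_div_iff (ne_of_gt (hpos i)), sub_mul, inv_mul_cancel₀ (ne_of_gt (hpos i))]
      ring
    linarith [this, h2.ge]
  have h3 : (c * w ^ i) / (1 - c * w ^ i) ≤ c / (1 - c) * w ^ i := by
    rw [div_le_iff₀ (hpos i), div_mul_eq_mul_div, div_mul_eq_mul_div,
      le_div_iff₀ (by linarith : (0:ℝ) < 1 - c)]
    have hw : 0 ≤ w ^ i := by positivity
    nlinarith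
  linarith
lemma geom_hasProd {c w : ℝ} (hw0 : 0 < w) (hw1 : w < 1) (hc0 : 0 < c) (hc1 : c < 1) :
    HasProd (fun i : ℕ => 1 - c * w ^ i)
      (Real.exp (∑' i : ℕ, Real.log (1 - c * w ^ i))) := by
  have hpos := geom_pos hw0 hw1 hc0 hc1
  have hfun : (fun i : ℕ => Real.exp (Real.log (1 - c * w ^ i))) = fun i => 1 - c * w ^ i :=
    funext fun i => Real.exp_log (hpos i)
  exact hfun ▸ (log_summable hw0 hw1 hc0 hc1).hasSum.rexp

lemma geom_tprod_pos {c w : ℝ} (hw0 : 0 < w) (hw1 : w < 1) (hc0 : 0 < c) (hc1 : c < 1) :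
    0 < ∏' i : ℕ, (1 - c * w ^ i) := by
  rw [(geom_hasProd hw0 hw1 hc0 hc1).tprod_eq]
  exact Real.exp_pos _

lemma geom_tendsto {c w : ℝ} (hw0 : 0 < w) (hw1 : w < 1) (hc0 : 0 < c) (hc1 : c < 1) :
    Filter.Tendsto (fun N => ∏ i ∈ Finset.range N, (1 - c * w ^ i)) atTop
      (nhds (∏' i : ℕ, (1 - c * w ^ i))) := by
  exact ((geom_hasProd hw0 hw1 hc0 hc1).tprod_eq ▸
    (geom_hasProd hw0 hw1 hc0 hc1)).tendsto_prod_nat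

lemma bound_summable {Q x : ℝ} (hQ0 : 0 < Q) (hQ1 : Q < 1) (hx : 0 < x)
    (h1 : x * Q < 1) (h2 : x⁻¹ * Q < 1) :
    Summable (fun n : ℤ => Q ^ (n ^ 2) * x ^ n) := by
  have hgen : ∀ y : ℝ, 0 < y → y * Q < 1 →
      Summable (fun n : ℕ => Q ^ ((n : ℤ) ^ 2) * y ^ (n : ℤ)) := by
    intro y hy hyQ
    have heq : ∀ n : ℕ, Q ^ ((n : ℤ) ^ 2) * y ^ ((n : ℤ)) = Q ^ (n ^ 2) * y ^ n := by
      intro n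
      rw [show ((n : ℤ) ^ 2) = ((n ^ 2 : ℕ) : ℤ) by push_cast; ring, zpow_natCast, zpow_natCast]
    simp only [heq]
    refine Summable.of_nonneg_of_le (fun n => by positivity) (fun n => ?_)
      (summable_geometric_of_lt_one (by positivity) hyQ)
    have hle : Q ^ (n ^ 2) ≤ Q ^ n :=
      pow_le_pow_of_le_one hQ0.le hQ1.le (Nat.le_self_pow (by norm_num) n)
    calc Q ^ (n ^ 2) * y ^ n ≤ Q ^ n * y ^ n := by
          have : (0:ℝ) ≤ y ^ n := by positivity
          nlinarith
      _ = (y * Q) ^ n := by rw [mul_pow]; ring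
  apply Summable.of_nat_of_neg
  · exact hgen x hx h1
  · have := hgen x⁻¹ (inv_pos.mpr hx) h2
    refine this.congr fun n => ?_
    rw [show ((-n : ℤ) ^ 2) = (n : ℤ) ^ 2 by ring, zpow_neg, ← inv_zpow]

theorem jtp (Q x : ℝ) (hQ0 : 0 < Q) (hQ1 : Q < 1) (hx : 0 < x)
    (h1 : x * Q < 1) (h2 : x⁻¹ * Q < 1) :
    (Summable fun n : ℤ => |(-1 : ℝ) ^ n * Q ^ (n ^ 2) * x ^ n|) ∧
    (∏' i : ℕ, ((1 - x * Q ^ (2 * i + 1)) * (1 - x⁻¹ * Q ^ (2 * i + 1)))) *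
      (∏' i : ℕ, (1 - (Q ^ 2) ^ (i + 1)))
    = ∑' n : ℤ, (-1 : ℝ) ^ n * Q ^ (n ^ 2) * x ^ n := by
  have hQne : Q ≠ 0 := ne_of_gt hQ0
  have hxne : x ≠ 0 := ne_of_gt hx
  have hr0 : (0:ℝ) < Q ^ 2 := by positivity
  have hr1 : Q ^ 2 < 1 := by nlinarith
  have hxQ0 : 0 < x * Q := by positivity
  have hxQ0' : 0 < x⁻¹ * Q := by positivity
  -- rewrite the three products in `c * w ^ i` form
  have hfA : ∀ i : ℕ, 1 - x * Q ^ (2 * i + 1) = 1 - (x * Q) * (Q ^ 2) ^ i := by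
    intro i; rw [pow_add, pow_mul, pow_one]; ring
  have hfB : ∀ i : ℕ, 1 - x⁻¹ * Q ^ (2 * i + 1) = 1 - (x⁻¹ * Q) * (Q ^ 2) ^ i := by
    intro i; rw [pow_add, pow_mul, pow_one]; ring
  have hfC : ∀ i : ℕ, 1 - (Q ^ 2) ^ (i + 1) = 1 - (Q ^ 2) * (Q ^ 2) ^ i := by
    intro i; rw [pow_succ]; ring
  set A : ℝ := ∏' i : ℕ, (1 - (x * Q) * (Q ^ 2) ^ i) with hA
  set B : ℝ := ∏' i : ℕ, (1 - (x⁻¹ * Q) * (Q ^ 2) ^ i) with hB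
  set C : ℝ := ∏' i : ℕ, (1 - (Q ^ 2) * (Q ^ 2) ^ i) with hC
  have hCpos : 0 < C := geom_tprod_pos hr0 hr1 hr0 hr1
  have hCne : C ≠ 0 := ne_of_gt hCpos
  set PP : ℕ → ℝ := fun M => ∏ j ∈ Finset.range M, (1 - (Q ^ 2) ^ (j + 1)) with hPP
  have hPPfac : ∀ j : ℕ, 0 < 1 - (Q ^ 2) ^ (j + 1) := by
    intro j; rw [hfC]; exact geom_pos hr0 hr1 hr0 hr1 j
  have hPPpos : ∀ M, 0 < PP M := fun M => Finset.prod_pos fun j _ => hPPfac j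
  have hPPne : ∀ M, PP M ≠ 0 := fun M => ne_of_gt (hPPpos M)
  have hPPtend : Tendsto PP atTop (nhds C) := by
    have := geom_tendsto hr0 hr1 hr0 hr1
    refine this.congr fun N => ?_
    exact Finset.prod_congr rfl fun j _ => (hfC j).symm
  have hfacle1 : ∀ j : ℕ, 1 - (Q ^ 2) ^ (j + 1) ≤ 1 := by
    intro j
    nlinarith [pow_pos hr0 (j + 1)]
  have hClePP : ∀ M, C ≤ PP M := by
    intro M
    refine le_of_tendsto hPPtend ?_
    filter_upwards [eventually_ge_atTop M] with K hK
    calc PP K = PP M * ∏ j ∈ Finset.Ico M K, (1 - (Q ^ 2) ^ (j + 1)) := by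
          rw [hPP]; exact (Finset.prod_range_mul_prod_Ico _ hK).symm
      _ ≤ PP M * 1 := by
          refine mul_le_mul_of_nonneg_left ?_ (hPPpos M).le
          exact Finset.prod_le_one (fun j _ => (hPPfac j).le) (fun j _ => hfacle1 j)
      _ = PP M := mul_one _
  -- gb closed form in terms of PP
  have hgb_eq : ∀ N k : ℕ, k ≤ 2 * N →
      gb (Q ^ 2) (2 * N) k = (PP (2 * N) / PP (2 * N - k)) / PP k := by
    intro N k hk
    rw [gb, if_pos hk]
    congr 1
    rw [eq_div_iff (hPPne _), hPP, mul_comm]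
    exact Finset.prod_range_mul_prod_Ico _ (by omega)
  have hgb_nonneg : ∀ N k : ℕ, 0 ≤ gb (Q ^ 2) (2 * N) k := by
    intro N k
    rcases le_or_gt k (2 * N) with hk | hk
    · rw [hgb_eq N k hk]
      exact div_nonneg (div_nonneg (hPPpos _).le (hPPpos _).le) (hPPpos _).le
    · rw [gb_of_gt _ hk]
  have hCgb_le : ∀ N k : ℕ, C * gb (Q ^ 2) (2 * N) k ≤ 1 := by
    intro N k
    rcases le_or_gt k (2 * N) with hk | hk
    · rw [hgb_eq N k hk]
      have h3 : C * ((PP (2 * N) / PP (2 * N - k)) / PP k)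
          ≤ PP k * ((PP (2 * N) / PP (2 * N - k)) / PP k) := by
        refine mul_le_mul_of_nonneg_right (hClePP k)
          (div_nonneg (div_nonneg (hPPpos _).le (hPPpos _).le) (hPPpos _).le)
      have h4 : PP k * ((PP (2 * N) / PP (2 * N - k)) / PP k) = PP (2 * N) / PP (2 * N - k) := by
        rw [mul_div_assoc', mul_div_cancel_left₀ _ (hPPne k)]
      have h5 : PP (2 * N) / PP (2 * N - k) ≤ 1 := by
        rw [div_le_one (hPPpos _)]
        calc PP (2 * N) = PP (2 * N - k) * ∏ j ∈ Finset.Ico (2 * N - k) (2 * N),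
              (1 - (Q ^ 2) ^ (j + 1)) := by
              rw [hPP]; exact (Finset.prod_range_mul_prod_Ico _ (by omega)).symm
          _ ≤ PP (2 * N - k) * 1 := by
              refine mul_le_mul_of_nonneg_left ?_ (hPPpos _).le
              exact Finset.prod_le_one (fun j _ => (hPPfac j).le) (fun j _ => hfacle1 j)
          _ = PP (2 * N - k) := mul_one _
      linarith [h3, h4 ▸ h3, h5]
    · rw [gb_of_gt _ hk]; norm_num
  -- the approximating family
  set h : ℤ → ℝ := fun n => (-1 : ℝ) ^ n * Q ^ (n ^ 2) * x ^ n with hh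
  set g : ℕ → ℤ → ℝ := fun N n =>
    if n.natAbs ≤ N then h n * (C * gb (Q ^ 2) (2 * N) (n + N).toNat) else 0 with hg
  have hsign_abs : ∀ n : ℤ, |(-1 : ℝ) ^ n| = 1 := by
    intro n
    rcases Int.even_or_odd n with he | ho
    · rw [he.neg_one_zpow]; norm_num
    · rw [ho.neg_one_zpow]; norm_num
  have habs_h : ∀ n : ℤ, |h n| = Q ^ (n ^ 2) * x ^ n := by
    intro n
    rw [hh]
    simp only
    rw [abs_mul, abs_mul, hsign_abs, one_mul, abs_of_pos (zpow_pos hQ0 _),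
      abs_of_pos (zpow_pos hx _)]
  have hboundsum : Summable (fun n : ℤ => Q ^ (n ^ 2) * x ^ n) :=
    bound_summable hQ0 hQ1 hx h1 h2
  -- tsum of g N equals C times partial product
  have htsum_g : ∀ N : ℕ, ∑' n : ℤ, g N n =
      C * ∏ i ∈ Finset.range N, ((1 - x * Q ^ (2 * i + 1)) * (1 - x⁻¹ * Q ^ (2 * i + 1))) := by
    intro N
    have hvan : ∀ n : ℤ, n ∉ Finset.Icc (-(N:ℤ)) N → g N n = 0 := by
      intro n hn
      simp only [Finset.mem_Icc] at hn
      simp only [hg]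
      rw [if_neg (by omega)]
    rw [tsum_eq_sum hvan]
    have hbij : ∑ n ∈ Finset.Icc (-(N:ℤ)) N, g N n =
        ∑ k ∈ Finset.range (2 * N + 1),
          (C * ((-1:ℝ) ^ N * (x ^ N)⁻¹)) *
            ((-1 : ℝ) ^ k * gb (Q ^ 2) (2 * N) k * Q ^ (((k : ℤ) - N) ^ 2) * x ^ k) := by
      refine Finset.sum_nbij' (fun n => (n + N).toNat) (fun k => (k : ℤ) - N) ?_ ?_ ?_ ?_ ?_
      · intro n hn; simp only [Finset.mem_Icc] at hn; simp only [Finset.mem_range]; omega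
      · intro k hk; simp only [Finset.mem_range] at hk; simp only [Finset.mem_Icc]; omega
      · intro n hn; simp only [Finset.mem_Icc] at hn; omega
      · intro k hk; simp only [Finset.mem_range] at hk; omega
      · intro n hn
        simp only [Finset.mem_Icc] at hn
        simp only [hg]
        rw [if_pos (by omega)]
        have hk : ((((n + N).toNat : ℕ)) : ℤ) = n + N := by omega
        have e1 : ((-1:ℝ)) ^ ((n + (N:ℤ)).toNat) = (-1:ℝ) ^ n * (-1:ℝ) ^ N := by
          rw [← zpow_natCast (-1:ℝ) ((n + (N:ℤ)).toNat), hk,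
            zpow_add₀ (by norm_num : (-1:ℝ) ≠ 0), zpow_natCast]
        have e2 : x ^ ((n + (N:ℤ)).toNat) = x ^ n * x ^ N := by
          rw [← zpow_natCast x ((n + (N:ℤ)).toNat), hk, zpow_add₀ hxne, zpow_natCast]
        have e3 : Q ^ ((((((n + (N:ℤ)).toNat) : ℕ) : ℤ) - N) ^ 2) = Q ^ (n ^ 2) := by
          rw [hk]; congr 1; ring
        rw [e1, e2, e3, hh]
        simp only
        have hxNne : (x : ℝ) ^ N ≠ 0 := pow_ne_zero _ hxne
        rcases Nat.even_or_odd N with hN | hN <;> rw [hN.neg_one_pow] <;> field_simp <;> ring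
    rw [hbij, ← Finset.mul_sum, ← finite_jacobi Q x hQ0 hQ1 hx N]
    have hxN : (x ^ N) ≠ 0 := pow_ne_zero _ hxne
    rcases Nat.even_or_odd N with hN | hN <;> rw [hN.neg_one_pow] <;> field_simp <;> ring
  -- convergence of `∑' g N` to `C * (A * B)`
  have hAprod : Tendsto (fun N => ∏ i ∈ Finset.range N, (1 - (x * Q) * (Q ^ 2) ^ i)) atTop
      (nhds A) := geom_tendsto hr0 hr1 hxQ0 h1
  have hBprod : Tendsto (fun N => ∏ i ∈ Finset.range N, (1 - (x⁻¹ * Q) * (Q ^ 2) ^ i)) atTop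
      (nhds B) := geom_tendsto hr0 hr1 hxQ0' h2
  have htend1 : Tendsto (fun N => ∑' n : ℤ, g N n) atTop (nhds (C * (A * B))) := by
    simp only [htsum_g]
    refine tendsto_const_nhds.mul ?_
    have hmul := hAprod.mul hBprod
    refine hmul.congr fun N => ?_
    rw [← Finset.prod_mul_distrib]
    exact Finset.prod_congr rfl fun i _ => by rw [hfA, hfB]
  -- pointwise convergence
  have hab : ∀ n : ℤ, Tendsto (fun N => g N n) atTop (nhds (h n)) := by
    intro n
    have hgbtend : Tendsto (fun N : ℕ => C * gb (Q ^ 2) (2 * N) ((n + (N:ℤ)).toNat)) atTop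
        (nhds 1) := by
      have hT1 : Tendsto (fun N : ℕ => PP (2 * N)) atTop (nhds C) :=
        hPPtend.comp (tendsto_atTop_mono (fun N => by simp only [id_eq]; omega) tendsto_id)
      have hT2 : Tendsto (fun N : ℕ => PP (((N:ℤ) - n).toNat)) atTop (nhds C) :=
        hPPtend.comp (tendsto_atTop_mono
          (fun N => (by omega : N - n.natAbs ≤ ((N:ℤ) - n).toNat))
          (tendsto_sub_atTop_nat _))
      have hT3 : Tendsto (fun N : ℕ => PP ((n + (N:ℤ)).toNat)) atTop (nhds C) :=
        hPPtend.comp (tendsto_atTop_mono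
          (fun N => (by omega : N - n.natAbs ≤ (n + (N:ℤ)).toNat))
          (tendsto_sub_atTop_nat _))
      have hcomb : Tendsto
          (fun N : ℕ => C * ((PP (2 * N) / PP (((N:ℤ) - n).toNat)) / PP ((n + (N:ℤ)).toNat)))
          atTop (nhds (C * ((C / C) / C))) :=
        tendsto_const_nhds.mul ((hT1.div hT2 hCne).div hT3 hCne)
      have hone : C * ((C / C) / C) = 1 := by field_simp
      rw [hone] at hcomb
      refine hcomb.congr' ?_
      filter_upwards [eventually_ge_atTop n.natAbs] with N hN
      rw [hgb_eq N ((n + (N:ℤ)).toNat) (by omega),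
        show 2 * N - (n + (N:ℤ)).toNat = (((N:ℤ) - n)).toNat by omega]
    have hmul : Tendsto (fun N : ℕ => h n * (C * gb (Q ^ 2) (2 * N) ((n + (N:ℤ)).toNat))) atTop
        (nhds (h n * 1)) := tendsto_const_nhds.mul hgbtend
    rw [mul_one] at hmul
    refine hmul.congr' ?_
    filter_upwards [eventually_ge_atTop n.natAbs] with N hN
    simp only [hg]
    rw [if_pos hN]
  -- domination
  have hbnd : ∀ N : ℕ, ∀ n : ℤ, ‖g N n‖ ≤ Q ^ (n ^ 2) * x ^ n := by
    intro N n
    simp only [hg]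
    split_ifs with hcase
    · rw [Real.norm_eq_abs, abs_mul, habs_h]
      have h6 : |C * gb (Q ^ 2) (2 * N) ((n + (N:ℤ)).toNat)| ≤ 1 := by
        rw [abs_of_nonneg (mul_nonneg hCpos.le (hgb_nonneg _ _))]
        exact hCgb_le _ _
      have h7 : (0:ℝ) ≤ Q ^ (n ^ 2) * x ^ n := by positivity
      nlinarith [abs_nonneg (h n)]
    · rw [norm_zero]
      positivity
  have tannery := tendsto_tsum_of_dominated_convergence hboundsum hab
    (Filter.Eventually.of_forall hbnd)
  have heq : C * (A * B) = ∑' n : ℤ, h n := tendsto_nhds_unique htend1 tannery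
  have habs : Summable fun n : ℤ => |h n| := hboundsum.congr fun n => (habs_h n).symm
  refine ⟨habs, ?_⟩
  have hmA : Multipliable fun i : ℕ => 1 - (x * Q) * (Q ^ 2) ^ i :=
    ⟨_, geom_hasProd hr0 hr1 hxQ0 h1⟩
  have hmB : Multipliable fun i : ℕ => 1 - (x⁻¹ * Q) * (Q ^ 2) ^ i :=
    ⟨_, geom_hasProd hr0 hr1 hxQ0' h2⟩
  have hpair : (∏' i : ℕ, ((1 - x * Q ^ (2 * i + 1)) * (1 - x⁻¹ * Q ^ (2 * i + 1)))) = A * B := by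
    have hp : HasProd (fun i : ℕ => (1 - (x * Q) * (Q ^ 2) ^ i) * (1 - (x⁻¹ * Q) * (Q ^ 2) ^ i))
        (A * B) := hmA.hasProd.mul hmB.hasProd
    rw [← hp.tprod_eq]
    exact tprod_congr fun i => by rw [hfA, hfB]
  have hthird : (∏' i : ℕ, (1 - (Q ^ 2) ^ (i + 1))) = C :=
    tprod_congr fun i => hfC i
  rw [hpair, hthird, hh]
  rw [← heq]
  ring

/-- For real `0 < a < p` and `0 < q < 1`,
`[a, p; q] · ∏_{n ≥ 1} (1 - q^{pn}) = ∑_{n ∈ ℤ} (-1)^n q^{(p n² + (p - 2a) n)/2}`,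
the bilateral theta series converging absolutely (real powers of `q`). -/
theorem stmt4 (a p : ℝ) (ha : 0 < a) (hap : a < p)
    (q : ℝ) (hq0 : 0 < q) (hq1 : q < 1) :
    Summable (fun n : ℤ =>
      |(-1 : ℝ) ^ n * q ^ ((p * (n : ℝ) ^ 2 + (p - 2 * a) * (n : ℝ)) / 2)|) ∧
    (∏' n : ℕ, (1 - q ^ (p * (n : ℝ) + a)) * (1 - q ^ (p * (n : ℝ) + p - a))) *
      (∏' n : ℕ, (1 - q ^ (p * ((n : ℝ) + 1)))) =
    ∑' n : ℤ, (-1 : ℝ) ^ n * q ^ ((p * (n : ℝ) ^ 2 + (p - 2 * a) * (n : ℝ)) / 2) := by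
  have hp : 0 < p := lt_trans ha hap
  set Q : ℝ := q ^ (p / 2) with hQdef
  set x : ℝ := q ^ ((p - 2 * a) / 2) with hxdef
  have hQ0 : 0 < Q := Real.rpow_pos_of_pos hq0 _
  have hx0 : 0 < x := Real.rpow_pos_of_pos hq0 _
  have hQ1 : Q < 1 := Real.rpow_lt_one hq0.le hq1 (by linarith)
  have hxQ : x * Q = q ^ (p - a) := by
    rw [hQdef, hxdef, ← Real.rpow_add hq0]
    congr 1; ring
  have hxinv : x⁻¹ = q ^ (-((p - 2 * a) / 2)) := by
    rw [hxdef, Real.rpow_neg hq0.le]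
  have hxQ' : x⁻¹ * Q = q ^ a := by
    rw [hxinv, hQdef, ← Real.rpow_add hq0]
    congr 1; ring
  have h1 : x * Q < 1 := by
    rw [hxQ]; exact Real.rpow_lt_one hq0.le hq1 (by linarith)
  have h2 : x⁻¹ * Q < 1 := by
    rw [hxQ']; exact Real.rpow_lt_one hq0.le hq1 ha
  obtain ⟨hsum, heq⟩ := jtp Q x hQ0 hQ1 hx0 h1 h2
  -- summand conversion
  have hQpow : ∀ m : ℕ, Q ^ m = q ^ (p / 2 * (m : ℝ)) := by
    intro m
    rw [hQdef, ← Real.rpow_natCast (q ^ (p / 2)) m, ← Real.rpow_mul hq0.le]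
  have hterm : ∀ n : ℤ, Q ^ (n ^ 2) * x ^ n
      = q ^ ((p * (n : ℝ) ^ 2 + (p - 2 * a) * (n : ℝ)) / 2) := by
    intro n
    have e1 : Q ^ (n ^ 2) = q ^ (p / 2 * ((n : ℝ)) ^ 2) := by
      rw [hQdef, ← Real.rpow_intCast (q ^ (p / 2)) (n ^ 2), ← Real.rpow_mul hq0.le]
      congr 1
      push_cast
      ring
    have e2 : x ^ n = q ^ ((p - 2 * a) / 2 * ((n : ℝ))) := by
      rw [hxdef, ← Real.rpow_intCast (q ^ ((p - 2 * a) / 2)) n, ← Real.rpow_mul hq0.le]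
    rw [e1, e2, ← Real.rpow_add hq0]
    congr 1
    ring
  have hsummand : ∀ n : ℤ, (-1 : ℝ) ^ n * Q ^ (n ^ 2) * x ^ n
      = (-1 : ℝ) ^ n * q ^ ((p * (n : ℝ) ^ 2 + (p - 2 * a) * (n : ℝ)) / 2) := by
    intro n
    rw [mul_assoc, hterm]
  constructor
  · refine hsum.congr fun n => ?_
    rw [hsummand]
  · have hpair : ∀ n : ℕ, (1 - x * Q ^ (2 * n + 1)) * (1 - x⁻¹ * Q ^ (2 * n + 1))
        = (1 - q ^ (p * (n : ℝ) + a)) * (1 - q ^ (p * (n : ℝ) + p - a)) := by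
      intro n
      have e3 : x * Q ^ (2 * n + 1) = q ^ (p * (n : ℝ) + p - a) := by
        rw [hQpow, hxdef, ← Real.rpow_add hq0]
        congr 1
        push_cast
        ring
      have e4 : x⁻¹ * Q ^ (2 * n + 1) = q ^ (p * (n : ℝ) + a) := by
        rw [hQpow, hxinv, ← Real.rpow_add hq0]
        congr 1
        push_cast
        ring
      rw [e3, e4]
      ring
    have hthird : ∀ n : ℕ, 1 - (Q ^ 2) ^ (n + 1) = 1 - q ^ (p * ((n : ℝ) + 1)) := by
      intro n
      have e5 : (Q ^ 2 : ℝ) = q ^ p := by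
        rw [hQpow 2, show (p / 2 * (2:ℕ) : ℝ) = p by push_cast; ring]
      rw [e5, ← Real.rpow_natCast (q ^ p) (n + 1), ← Real.rpow_mul hq0.le]
      congr 2
      push_cast
      ring
    calc (∏' n : ℕ, (1 - q ^ (p * (n : ℝ) + a)) * (1 - q ^ (p * (n : ℝ) + p - a))) *
          (∏' n : ℕ, (1 - q ^ (p * ((n : ℝ) + 1))))
        = (∏' n : ℕ, ((1 - x * Q ^ (2 * n + 1)) * (1 - x⁻¹ * Q ^ (2 * n + 1)))) *
          (∏' n : ℕ, (1 - (Q ^ 2) ^ (n + 1))) := by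
          rw [tprod_congr hpair, tprod_congr hthird]
      _ = ∑' n : ℤ, (-1 : ℝ) ^ n * Q ^ (n ^ 2) * x ^ n := heq
      _ = _ := tsum_congr hsummand
end

section
/- Let a and p be real numbers with 0 < a < p and let q be real with 0 < q < 1. Then ( ∏_{n=0}^∞ (1 − q^{pn+a})(1 − q^{pn+p−a}) ) · ( ∏_{n=1}^∞ (1 − q^{pn}) ) = ∑_{n=0}^∞ (−1)ⁿ q^{p n(n+1)/2 − a n} − q^{a} · ∑_{n=0}^∞ (−1)ⁿ q^{p n(n+1)/2 + a n}, where q raised to real exponents is the real power and both series converge absolutely. -/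
open Finset Filter Topology

namespace JTP

noncomputable section

/-- triangular numbers -/
def T (k : ℕ) : ℕ := k.choose 2

lemma T_succ (k : ℕ) : T (k+1) = T k + k := by
  simp [T, Nat.choose_succ_succ, Nat.choose_one_right, Nat.add_comm]

lemma two_mul_T (k : ℕ) : 2 * T (k+1) = (k+1) * k := by
  induction k with
  | zero => simp [T]
  | succ n ih => rw [show n+1+1 = (n+1)+1 from rfl, T_succ, Nat.mul_add, ih]; ring

/-- Gaussian binomial (as a real number, with parameter Q) -/
def G (Q : ℝ) : ℕ → ℕ → ℝ
  | _, 0 => 1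
  | 0, _+1 => 0
  | n+1, k+1 => G Q n (k+1) + Q^(n-k) * G Q n k

@[simp] lemma G_zero (Q : ℝ) (n : ℕ) : G Q n 0 = 1 := by cases n <;> rfl

lemma G_succ_succ (Q : ℝ) (n k : ℕ) :
    G Q (n+1) (k+1) = G Q n (k+1) + Q^(n-k) * G Q n k := rfl

lemma G_eq_zero (Q : ℝ) : ∀ n k, n < k → G Q n k = 0 := by
  intro n
  induction n with
  | zero => intro k hk; match k, hk with | k+1, _ => rfl
  | succ n ih =>
    intro k hk
    match k, hk with
    | k+1, hk =>
      rw [G_succ_succ, ih (k+1) (by omega), ih k (by omega)]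
      ring

lemma qbinom (Q z : ℝ) (N : ℕ) :
    ∏ j ∈ range N, (1 + z * Q^j) = ∑ k ∈ range (N+1), G Q N k * Q^(T k) * z^k := by
  induction N with
  | zero => simp [T]
  | succ N ih =>
    rw [Finset.prod_range_succ, ih, mul_add, mul_one]
    rw [Finset.sum_range_succ' (fun k => G Q (N+1) k * Q^(T k) * z^k) (N+1)]
    have h1 : ∀ k ∈ range (N+1), G Q (N+1) (k+1) * Q^(T (k+1)) * z^(k+1)
        = G Q N (k+1) * Q^(T (k+1)) * z^(k+1)
          + (G Q N k * Q^(T k) * z^k) * (z * Q^N) := by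
      intro k hk
      rw [Finset.mem_range] at hk
      rw [G_succ_succ, T_succ]
      have hkN : k ≤ N := by omega
      have hQ : Q^(N-k) * Q^(T k + k) = Q^(T k) * Q^N := by
        rw [← pow_add, ← pow_add]; congr 1; omega
      linear_combination (G Q N k * z^(k+1)) * hQ
    rw [Finset.sum_congr rfl h1] <;> try skip
    rw [Finset.sum_add_distrib, ← Finset.sum_mul]
    have h2 : ∑ k ∈ range (N+1), G Q N (k+1) * Q^(T (k+1)) * z^(k+1)
        = (∑ k ∈ range (N+1), G Q N k * Q^(T k) * z^k) - 1 := by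
      have h4 := Finset.sum_range_succ' (fun k => G Q N k * Q^(T k) * z^k) (N+1)
      have h3 := Finset.sum_range_succ (fun k => G Q N k * Q^(T k) * z^k) (N+1)
      rw [G_eq_zero Q N (N+1) (by omega)] at h3
      simp only [G_zero, pow_zero, mul_one, one_mul, zero_mul, mul_zero, add_zero, T] at h4 h3
      simp only [T]
      simp only [show Nat.choose 0 2 = 0 from rfl, pow_zero] at h4 h3
      linarith [h3]
    rw [h2]
    simp only [G_zero, pow_zero, mul_one, one_mul, T, Nat.choose_zero_succ]
    ring

/-- Partial Euler product -/
def E (Q : ℝ) (m : ℕ) : ℝ := ∏ i ∈ range m, (1 - Q^(i+1))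

@[simp] lemma E_zero (Q : ℝ) : E Q 0 = 1 := by simp [E]

lemma E_succ (Q : ℝ) (m : ℕ) : E Q (m+1) = E Q m * (1 - Q^(m+1)) := by
  simp [E, Finset.prod_range_succ]

lemma G_self (Q : ℝ) : ∀ n, G Q n n = 1 := by
  intro n
  induction n with
  | zero => rfl
  | succ n ih => rw [G_succ_succ, G_eq_zero Q n (n+1) (by omega), ih]; simp

lemma G_mul_E (Q : ℝ) : ∀ n k, k ≤ n → G Q n k * (E Q k * E Q (n-k)) = E Q n := by
  intro n
  induction n with
  | zero => intro k hk; interval_cases k; simp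
  | succ n ih =>
    intro k hk
    match k with
    | 0 => simp
    | k+1 =>
      rw [G_succ_succ]
      rcases Nat.lt_or_ge k n with hkn | hkn
      · -- k+1 ≤ n
        have e1 : n + 1 - (k+1) = (n - (k+1)) + 1 := by omega
        have e2 : n - k = (n - (k+1)) + 1 := by omega
        have ih1 := ih (k+1) (by omega)
        have ih2 := ih k (by omega)
        rw [e1, E_succ Q (n - (k+1))]
        have e3 : n - (k+1) + 1 = n - k := by omega
        rw [e3]
        rw [E_succ Q n, ← ih1]
        have e4 : E Q (n - k) = E Q (n - (k+1)) * (1 - Q^(n-k)) := by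
          rw [← e3, E_succ, e3]
        rw [e4] at ih2
        have e5 : Q^(n-k) * Q^(k+1) = Q^(n+1) := by
          rw [← pow_add]; congr 1; omega
        rw [E_succ Q k] at ih1 ⊢
        linear_combination (Q^(n+1)-Q^(n-k))*ih1 + Q^(n-k)*(1-Q^(k+1))*ih2 - E Q n * e5
      · -- k = n
        have hk' : k = n := by omega
        subst hk'
        rw [G_eq_zero Q k (k+1) (by omega)]
        simp [G_self, E_succ, Nat.sub_self]

section Est
variable {Q : ℝ} (hQ0 : 0 < Q) (hQ1 : Q < 1)
include hQ0 hQ1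

lemma E_pos (m : ℕ) : 0 < E Q m := by
  apply Finset.prod_pos
  intro i _
  have : Q^(i+1) < 1 := pow_lt_one₀ hQ0.le hQ1 (by omega)
  linarith

lemma E_le_one (m : ℕ) : E Q m ≤ 1 := by
  apply Finset.prod_le_one
  · intro i _
    have : Q^(i+1) < 1 := pow_lt_one₀ hQ0.le hQ1 (by omega)
    linarith
  · intro i _
    have : 0 < Q^(i+1) := pow_pos hQ0 _
    linarith

lemma E_anti {m n : ℕ} (h : m ≤ n) : E Q n ≤ E Q m := by
  rw [E, E, ← Finset.prod_range_mul_prod_Ico _ h]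
  have h1 : ∏ i ∈ Finset.Ico m n, (1 - Q^(i+1)) ≤ 1 := by
    apply Finset.prod_le_one
    · intro i _
      have : Q^(i+1) < 1 := pow_lt_one₀ hQ0.le hQ1 (by omega)
      linarith
    · intro i _
      have : 0 < Q^(i+1) := pow_pos hQ0 _
      linarith
  calc E Q m * ∏ i ∈ Finset.Ico m n, (1 - Q^(i+1)) ≤ E Q m * 1 :=
        mul_le_mul_of_nonneg_left h1 (E_pos hQ0 hQ1 m).le
    _ = E Q m := mul_one _

omit hQ0 hQ1 in
lemma weierstrass (f : ℕ → ℝ) (h0 : ∀ i, 0 ≤ f i) (h1 : ∀ i, f i ≤ 1) (s : Finset ℕ) :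
    1 - ∑ i ∈ s, f i ≤ ∏ i ∈ s, (1 - f i) := by
  classical
  induction s using Finset.induction_on with
  | empty => simp
  | insert a s ha ih =>
    rw [Finset.sum_insert ha, Finset.prod_insert ha]
    have hp : (0:ℝ) ≤ ∏ i ∈ s, (1 - f i) := Finset.prod_nonneg (fun i _ => by linarith [h1 i])
    have hs : (0:ℝ) ≤ ∑ i ∈ s, f i := Finset.sum_nonneg (fun i _ => h0 i)
    nlinarith [mul_nonneg (sub_nonneg.2 (h1 a)) (sub_nonneg.2 ih), mul_nonneg (h0 a) hs]

lemma E_lower : ∃ c : ℝ, 0 < c ∧ ∀ m, c ≤ E Q m := by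
  obtain ⟨K, hK⟩ : ∃ K : ℕ, Q^(K+1) ≤ (1-Q)/2 := by
    have h := tendsto_pow_atTop_nhds_zero_of_lt_one hQ0.le hQ1
    have := (h.eventually_le_const (show (0:ℝ) < (1-Q)/2 by linarith)).exists
    obtain ⟨K, hK⟩ := this
    exact ⟨K, by calc Q^(K+1) ≤ Q^K := pow_le_pow_of_le_one hQ0.le hQ1.le (by omega)
                 _ ≤ (1-Q)/2 := hK⟩
  have hEK := E_pos hQ0 hQ1 K
  refine ⟨E Q K / 2, by linarith, ?_⟩
  intro m
  rcases le_or_gt m K with h | h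
  · have := E_anti hQ0 hQ1 h
    linarith
  · have hsplit : E Q K * ∏ i ∈ Finset.Ico K m, (1 - Q^(i+1)) = E Q m :=
      Finset.prod_range_mul_prod_Ico _ h.le
    have hsum : ∑ i ∈ Finset.Ico K m, Q^(i+1) ≤ 1/2 := by
      rw [Finset.sum_Ico_eq_sum_range]
      have hc : ∀ i ∈ range (m-K), Q^(K+i+1) = Q^(K+1) * Q^i := by
        intro i _; rw [← pow_add]; congr 1; omega
      rw [Finset.sum_congr rfl hc, ← Finset.mul_sum]
      have hgeom : ∑ i ∈ range (m-K), Q^i ≤ (1-Q)⁻¹ := by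
        have hs := hasSum_geometric_of_lt_one hQ0.le hQ1
        have h2 := Summable.sum_le_tsum (range (m-K)) (fun i _ => by positivity) hs.summable
        rwa [hs.tsum_eq] at h2
      calc Q^(K+1) * ∑ i ∈ range (m-K), Q^i ≤ Q^(K+1) * (1-Q)⁻¹ :=
            mul_le_mul_of_nonneg_left hgeom (by positivity)
        _ ≤ ((1-Q)/2) * (1-Q)⁻¹ := mul_le_mul_of_nonneg_right hK (by
              rw [inv_nonneg]; linarith)
        _ = 1/2 := by
              have h1Q : (1:ℝ)-Q ≠ 0 := by linarith
              field_simp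
    have hws := weierstrass (fun i => Q^(i+1)) (fun i => by positivity)
        (fun i => pow_le_one₀ hQ0.le hQ1.le) (Finset.Ico K m)
    have hp : (1:ℝ)/2 ≤ ∏ i ∈ Finset.Ico K m, (1 - Q^(i+1)) := by
      linarith
    nlinarith [hEK, hp]

end Est

/-- integer triangular numbers -/
def Tz (j : ℤ) : ℤ := j*(j-1)/2

lemma two_mul_Tz (j : ℤ) : 2 * Tz j = j*(j-1) := by
  apply Int.two_mul_ediv_two_of_even
  have := Int.even_mul_succ_self (j-1)
  simpa [mul_comm] using this

lemma T_int (k : ℕ) : (T k : ℤ) * 2 = k*(k-1) := by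
  match k with
  | 0 => simp [T]
  | k+1 =>
    have h := two_mul_T k
    have h2 : (2 * (T (k+1) : ℤ)) = ((k:ℤ)+1)*k := by exact_mod_cast h
    push_cast at h2
    push_cast
    linarith

lemma key_exp (N k : ℕ) : Tz ((k:ℤ) - N) = (T k : ℤ) - N*k + T (N+1) := by
  have h1 := two_mul_Tz ((k:ℤ) - N)
  have h2 := T_int k
  have h3 : (T (N+1) : ℤ) * 2 = (N+1)*N := by
    have h := two_mul_T N
    have h4 : (2 * (T (N+1) : ℤ)) = ((N:ℤ)+1)*N := by exact_mod_cast h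
    linarith
  have hr : ((k:ℤ) - N) * ((k:ℤ) - N - 1) = (k:ℤ)*(k-1) - 2*N*k + (N+1)*N := by ring
  linarith [h1, h2, h3, hr]

lemma sum_range_succ_id (N : ℕ) : ∑ j ∈ range N, (j+1) = T (N+1) := by
  induction N with
  | zero => simp [T]
  | succ N ih => rw [Finset.sum_range_succ, ih, T_succ (N+1)]

/-- the bilateral summand -/
def hh (Q x : ℝ) (j : ℤ) : ℝ := (-1:ℝ)^j * x^j * Q^(Tz j)

lemma star {Q x : ℝ} (hQ0 : 0 < Q) (hx0 : 0 < x) (N : ℕ) :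
    ∏ j ∈ range N, ((1 - x*Q^j) * (1 - Q^(j+1)/x))
      = ∑ k ∈ range (2*N+1), G Q (2*N) k * hh Q x ((k:ℤ) - N) := by
  have hQz : Q ≠ 0 := hQ0.ne'
  have hxz : x ≠ 0 := hx0.ne'
  set z : ℝ := -x * (Q^N)⁻¹ with hz
  set C : ℝ := (-1:ℝ)^N * x^N * (Q^(T (N+1)))⁻¹ with hC
  have hCz : C ≠ 0 := by
    apply mul_ne_zero (mul_ne_zero (pow_ne_zero _ (by norm_num)) (pow_ne_zero _ hxz))
    exact inv_ne_zero (pow_ne_zero _ hQz)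
  have hq := qbinom Q z (2*N)
  -- transform LHS of qbinom
  have hA : ∏ j ∈ range (2*N), (1 + z*Q^j)
      = C * ∏ j ∈ range N, ((1 - x*Q^j) * (1 - Q^(j+1)/x)) := by
    rw [two_mul, Finset.prod_range_add]
    have h2 : ∀ j ∈ range N, 1 + z*Q^(N+j) = 1 - x*Q^j := by
      intro j _
      rw [hz, pow_add]
      field_simp
      ring
    have h1 : ∏ j ∈ range N, (1 + z*Q^j)
        = ∏ j ∈ range N, ((-(x * (Q^(j+1))⁻¹)) * (1 - Q^(j+1)/x)) := by
      rw [← Finset.prod_range_reflect (fun j => 1 + z*Q^j) N]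
      apply Finset.prod_congr rfl
      intro j hj
      rw [Finset.mem_range] at hj
      have hNj : Q^N = Q^(N-1-j) * Q^(j+1) := by rw [← pow_add]; congr 1; omega
      rw [hz, hNj]
      field_simp
      ring
    rw [h1, Finset.prod_congr rfl h2, Finset.prod_mul_distrib]
    have h3 : ∏ j ∈ range N, (-(x * (Q^(j+1))⁻¹)) = (-1:ℝ)^N * x^N * (Q^(T (N+1)))⁻¹ := by
      have : ∀ j ∈ range N, (-(x * (Q^(j+1))⁻¹)) = (-1) * x * (Q^(j+1))⁻¹ := by
        intro j _; ring
      rw [Finset.prod_congr rfl this, Finset.prod_mul_distrib, Finset.prod_mul_distrib]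
      rw [Finset.prod_const, Finset.prod_const, Finset.prod_inv_distrib,
        Finset.prod_pow_eq_pow_sum, sum_range_succ_id]
      simp [Finset.card_range]
    rw [h3, hC, Finset.prod_mul_distrib]
    ring
  -- transform RHS of qbinom
  have hB : ∑ k ∈ range (2*N+1), G Q (2*N) k * Q^(T k) * z^k
      = C * ∑ k ∈ range (2*N+1), G Q (2*N) k * hh Q x ((k:ℤ) - N) := by
    rw [Finset.mul_sum]
    apply Finset.sum_congr rfl
    intro k _
    have hzk : z^k = (-1:ℝ)^k * x^k * (Q^(N*k))⁻¹ := by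
      rw [hz, show -x * (Q^N)⁻¹ = (-1) * (x * (Q^N)⁻¹) by ring, mul_pow, mul_pow,
        inv_pow, ← pow_mul]
      ring
    rw [hzk, hh, hC]
    have e1 : ((-1:ℝ))^((k:ℤ) - N) = (-1:ℝ)^k / (-1:ℝ)^N := by
      rw [zpow_sub₀ (by norm_num : (-1:ℝ) ≠ 0), zpow_natCast, zpow_natCast]
    have e2 : x^((k:ℤ) - N) = x^k / x^N := by
      rw [zpow_sub₀ hxz, zpow_natCast, zpow_natCast]
    have e3 : Q^(Tz ((k:ℤ) - N)) = Q^(T k) * Q^(T (N+1)) / Q^(N*k) := by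
      rw [key_exp, zpow_add₀ hQz, zpow_sub₀ hQz]
      rw [zpow_natCast, zpow_natCast]
      rw [show ((N:ℤ)*k) = ((N*k : ℕ) : ℤ) by push_cast; ring, zpow_natCast]
      ring
    rw [e1, e2, e3]
    have hm1 : ((-1:ℝ))^N ≠ 0 := pow_ne_zero _ (by norm_num)
    field_simp
  rw [hq, hB] at hA
  exact (mul_left_cancel₀ hCz hA.symm)

section Main
variable {Q x : ℝ} (hQ0 : 0 < Q) (hQ1 : Q < 1) (hx0 : 0 < x) (hQx : Q < x) (hx1 : x < 1)

lemma Tz_neg (n : ℕ) : Tz (-(n:ℤ)) = (T (n+1) : ℤ) := by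
  have h1 := two_mul_Tz (-(n:ℤ))
  have h := two_mul_T n
  have h2 : (2 * (T (n+1) : ℤ)) = ((n:ℤ)+1)*n := by exact_mod_cast h
  have : (-(n:ℤ))*(-(n:ℤ)-1) = ((n:ℤ)+1)*n := by ring
  omega

lemma Tz_pos (n : ℕ) : Tz ((n:ℤ)+1) = (T (n+1) : ℤ) := by
  have h1 := two_mul_Tz ((n:ℤ)+1)
  have h2 : (2 * (T (n+1) : ℤ)) = ((n:ℤ)+1)*n := by exact_mod_cast two_mul_T n
  have : ((n:ℤ)+1)*((n:ℤ)+1-1) = ((n:ℤ)+1)*n := by ring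
  omega

lemma neg_one_zpow_natCast (n : ℕ) : ((-1:ℝ))^(-(n:ℤ)) = (-1:ℝ)^n := by
  rw [zpow_neg, zpow_natCast, ← inv_pow]
  norm_num

include hQ0 hx0 in
lemma hh_neg (n : ℕ) : hh Q x (-(n:ℤ)) = (-1:ℝ)^n * (Q^(T (n+1)) * (x^n)⁻¹) := by
  rw [hh, Tz_neg, neg_one_zpow_natCast, zpow_neg, zpow_natCast, zpow_natCast]
  ring

include hQ0 hx0 in
lemma hh_pos (n : ℕ) : hh Q x ((n:ℤ)+1) = -(x * ((-1:ℝ)^n * (Q^(T (n+1)) * x^n))) := by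
  rw [hh, Tz_pos]
  rw [show ((n:ℤ)+1) = ((n+1 : ℕ) : ℤ) by push_cast; ring, zpow_natCast, zpow_natCast,
    zpow_natCast, pow_succ]
  ring

include hQ0 hQ1 hx0 in
lemma sum1 : Summable (fun n : ℕ => Q^(T (n+1)) * (x^n)⁻¹) := by
  apply summable_of_ratio_norm_eventually_le (r := 1/2) (by norm_num)
  have hev : ∀ᶠ n : ℕ in atTop, Q^(n+1) ≤ x/2 := by
    have h := tendsto_pow_atTop_nhds_zero_of_lt_one hQ0.le hQ1
    filter_upwards [h.eventually_le_const (show (0:ℝ) < x/2 by linarith)] with n hn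
    calc Q^(n+1) ≤ Q^n := pow_le_pow_of_le_one hQ0.le hQ1.le (by omega)
      _ ≤ x/2 := hn
  filter_upwards [hev] with n hn
  have hx : (0:ℝ) < x^n := pow_pos hx0 _
  have hT : Q^(T (n+1+1)) = Q^(T (n+1)) * Q^(n+1) := by rw [T_succ]; rw [pow_add]
  rw [Real.norm_of_nonneg (by positivity), Real.norm_of_nonneg (by positivity), hT, pow_succ x n, mul_inv]
  have h1 : Q ^ T (n + 1) * Q ^ (n + 1) * ((x ^ n)⁻¹ * x⁻¹)
      = (Q ^ T (n + 1) * (x^n)⁻¹) * (Q^(n+1) / x) := by ring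
  rw [h1]
  have h2 : Q^(n+1)/x ≤ 1/2 := by rw [div_le_div_iff₀ hx0 (by norm_num)]; linarith
  have h3 : (0:ℝ) ≤ Q ^ T (n + 1) * (x^n)⁻¹ := by positivity
  calc Q ^ T (n + 1) * (x ^ n)⁻¹ * (Q ^ (n + 1) / x) ≤ Q ^ T (n + 1) * (x ^ n)⁻¹ * (1/2) :=
        mul_le_mul_of_nonneg_left h2 h3
    _ = 1/2 * (Q ^ T (n + 1) * (x ^ n)⁻¹) := by ring

include hQ0 hQ1 hx0 hx1 in
lemma sum2 : Summable (fun n : ℕ => Q^(T (n+1)) * x^n) := by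
  apply summable_of_ratio_norm_eventually_le (r := 1/2) (by norm_num)
  have hev : ∀ᶠ n : ℕ in atTop, Q^(n+1) ≤ 1/2 := by
    have h := tendsto_pow_atTop_nhds_zero_of_lt_one hQ0.le hQ1
    filter_upwards [h.eventually_le_const (show (0:ℝ) < 1/2 by norm_num)] with n hn
    calc Q^(n+1) ≤ Q^n := pow_le_pow_of_le_one hQ0.le hQ1.le (by omega)
      _ ≤ 1/2 := hn
  filter_upwards [hev] with n hn
  have hT : Q^(T (n+1+1)) = Q^(T (n+1)) * Q^(n+1) := by rw [T_succ]; rw [pow_add]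
  rw [Real.norm_of_nonneg (by positivity), Real.norm_of_nonneg (by positivity), hT, pow_succ x n]
  have hxn : (0:ℝ) < x^n := pow_pos hx0 _
  have hQT : (0:ℝ) ≤ Q^(T (n+1)) := by positivity
  calc Q ^ T (n+1) * Q^(n+1) * (x^n * x) ≤ Q ^ T (n+1) * (1/2) * (x^n * 1) := by
        apply mul_le_mul (mul_le_mul_of_nonneg_left hn hQT)
          (mul_le_mul_of_nonneg_left hx1.le hxn.le) (by positivity) (by positivity)
    _ = 1/2 * (Q ^ T (n+1) * x^n) := by ring

omit hQ1 in
include hQ0 hx0 in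
lemma abs_hh_neg (n : ℕ) : |hh Q x (-(n:ℤ))| = Q^(T (n+1)) * (x^n)⁻¹ := by
  rw [hh_neg hQ0 hx0, abs_mul, abs_pow, abs_neg, abs_one, one_pow, one_mul,
    abs_of_nonneg (by positivity)]

omit hQ1 in
include hQ0 hx0 in
lemma abs_hh_pos (n : ℕ) : |hh Q x ((n:ℤ)+1)| = x * (Q^(T (n+1)) * x^n) := by
  rw [hh_pos hQ0 hx0, abs_neg, abs_mul, abs_of_nonneg hx0.le, abs_mul, abs_pow, abs_neg,
    abs_one, one_pow, one_mul, abs_of_nonneg (by positivity)]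

/-- summability of log(1 - u n) -/
lemma summable_log_one_sub {u : ℕ → ℝ} {c : ℝ} (hc : c < 1) (hu : Summable u)
    (h0 : ∀ n, 0 ≤ u n) (huc : ∀ n, u n ≤ c) :
    Summable (fun n => Real.log (1 - u n)) := by
  have hc0 : ∀ n, u n < 1 := fun n => lt_of_le_of_lt (huc n) hc
  apply Summable.of_norm_bounded (g := fun n => (1-c)⁻¹ * u n) (hu.mul_left _)
  intro n
  have h1 : (0:ℝ) < 1 - u n := by linarith [hc0 n]
  rw [Real.norm_eq_abs, abs_of_nonpos (Real.log_nonpos (by linarith) (by linarith [h0 n]))]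
  rw [← Real.log_inv]
  have h2 := Real.log_le_sub_one_of_pos (inv_pos.2 h1)
  have h3 : (1 - u n)⁻¹ - 1 = u n / (1 - u n) := by field_simp; ring
  have h4 : u n / (1 - u n) ≤ (1-c)⁻¹ * u n := by
    have h5 : (0:ℝ) < 1 - c := by linarith
    calc u n / (1 - u n) ≤ u n / (1 - c) :=
          div_le_div_of_nonneg_left (h0 n) h5 (by linarith [huc n])
      _ = (1-c)⁻¹ * u n := by rw [div_eq_inv_mul]
  linarith
include hQ0 hQ1 in
lemma summable_geom_succ : Summable (fun n : ℕ => Q^(n+1)) := by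
  apply ((summable_geometric_of_lt_one hQ0.le hQ1).mul_left Q).congr
  intro n
  rw [pow_succ]
  ring

include hQ0 hQ1 in
lemma mult_B : Multipliable (fun n : ℕ => 1 - Q^(n+1)) := by
  apply Real.multipliable_of_summable_log
    (fun n => by
      show (0:ℝ) < 1 - Q^(n+1)
      nlinarith [pow_lt_one₀ hQ0.le hQ1 (show n+1 ≠ 0 by omega)]) ?_
  apply summable_log_one_sub hQ1 (summable_geom_succ hQ0 hQ1)
  · intro n; positivity
  · intro n
    calc Q^(n+1) ≤ Q^1 := pow_le_pow_of_le_one hQ0.le hQ1.le (by omega)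
      _ = Q := pow_one Q

include hQ0 hQ1 hx0 hQx hx1 in
lemma mult_A : Multipliable (fun n : ℕ => (1 - x*Q^n) * (1 - Q^(n+1)/x)) := by
  have hf1 : ∀ n : ℕ, 0 < 1 - x*Q^n := by
    intro n
    have h1 : Q^n ≤ 1 := pow_le_one₀ hQ0.le hQ1.le
    nlinarith
  have hf2 : ∀ n : ℕ, 0 < 1 - Q^(n+1)/x := by
    intro n
    have h1 : Q^(n+1) ≤ Q := by
      calc Q^(n+1) ≤ Q^1 := pow_le_pow_of_le_one hQ0.le hQ1.le (by omega)
        _ = Q := pow_one Q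
    have h2 : Q^(n+1)/x < 1 := by rw [div_lt_one hx0]; linarith
    linarith
  apply Real.multipliable_of_summable_log
    (fun n => by
      show (0:ℝ) < (1 - x*Q^n) * (1 - Q^(n+1)/x)
      exact mul_pos (hf1 n) (hf2 n)) ?_
  have l1 : Summable (fun n : ℕ => Real.log (1 - x*Q^n)) := by
    apply summable_log_one_sub hx1 ((summable_geometric_of_lt_one hQ0.le hQ1).mul_left x)
    · intro n; positivity
    · intro n
      calc x * Q^n ≤ x * 1 := mul_le_mul_of_nonneg_left (pow_le_one₀ hQ0.le hQ1.le) hx0.le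
        _ = x := mul_one x
  have l2 : Summable (fun n : ℕ => Real.log (1 - Q^(n+1)/x)) := by
    apply summable_log_one_sub (c := Q/x) ((div_lt_one hx0).2 hQx)
      (((summable_geom_succ hQ0 hQ1)).div_const x)
    · intro n; positivity
    · intro n
      have hq : Q^(n+1) ≤ Q := by
        calc Q^(n+1) ≤ Q^1 := pow_le_pow_of_le_one hQ0.le hQ1.le (by omega)
          _ = Q := pow_one Q
      gcongr
  apply (l1.add l2).congr
  intro n
  rw [Real.log_mul (hf1 n).ne' (hf2 n).ne']

include hQ0 hQ1 hx0 hQx hx1 in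
theorem key : (∏' n : ℕ, ((1 - x*Q^n) * (1 - Q^(n+1)/x))) * (∏' n : ℕ, (1 - Q^(n+1)))
    = (∑' n : ℕ, hh Q x (-(n:ℤ))) + (∑' n : ℕ, hh Q x ((n:ℤ)+1)) := by
  obtain ⟨c, hc0, hc⟩ := E_lower hQ0 hQ1
  have hmB := mult_B hQ0 hQ1
  have hmA := mult_A hQ0 hQ1 hx0 hQx hx1
  set P : ℝ := ∏' n : ℕ, (1 - Q^(n+1)) with hPdef
  have hEP : Tendsto (fun N => E Q N) atTop (𝓝 P) := hmB.hasProd.tendsto_prod_nat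
  have hPc : c ≤ P := ge_of_tendsto' hEP hc
  have hP0 : 0 < P := lt_of_lt_of_le hc0 hPc
  have hGf : ∀ n k, k ≤ n → G Q n k = E Q n / (E Q k * E Q (n-k)) := by
    intro n k hk
    have h := G_mul_E Q n k hk
    have h1 : E Q k * E Q (n-k) ≠ 0 :=
      (mul_pos (E_pos hQ0 hQ1 k) (E_pos hQ0 hQ1 (n-k))).ne'
    rw [eq_div_iff h1]
    exact h
  have hGbound : ∀ n k, k ≤ n → |G Q n k| ≤ (c*c)⁻¹ := by
    intro n k hk
    rw [hGf n k hk]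
    have hden : 0 < E Q k * E Q (n-k) := mul_pos (E_pos hQ0 hQ1 k) (E_pos hQ0 hQ1 (n-k))
    rw [abs_of_nonneg (div_nonneg (E_pos hQ0 hQ1 n).le hden.le)]
    rw [inv_eq_one_div, div_le_div_iff₀ hden (by positivity)]
    have h1 : E Q n ≤ 1 := E_le_one hQ0 hQ1 n
    have h2 : c ≤ E Q k := hc k
    have h3 : c ≤ E Q (n-k) := hc (n-k)
    nlinarith [mul_le_mul h2 h3 hc0.le (by linarith : (0:ℝ) ≤ E Q k), mul_pos hc0 hc0]
  set fA : ℕ → ℕ → ℝ := fun N n => if n ≤ N then G Q (2*N) (N-n) * hh Q x (-(n:ℤ)) else 0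
    with hfA
  set fB : ℕ → ℕ → ℝ := fun N n => if n < N then G Q (2*N) (N+1+n) * hh Q x ((n:ℤ)+1) else 0
    with hfB
  -- finite identity in tsum form
  have hstar' : ∀ N, ∏ j ∈ range N, ((1 - x*Q^j) * (1 - Q^(j+1)/x))
      = (∑' n, fA N n) + (∑' n, fB N n) := by
    intro N
    rw [star hQ0 hx0 N]
    have htA : (∑' n, fA N n) = ∑ n ∈ range (N+1), fA N n :=
      tsum_eq_sum (fun b hb => by
        rw [Finset.mem_range] at hb
        simp only [hfA, if_neg (by omega : ¬ b ≤ N)])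
    have htB : (∑' n, fB N n) = ∑ n ∈ range N, fB N n :=
      tsum_eq_sum (fun b hb => by
        rw [Finset.mem_range] at hb
        simp only [hfB, if_neg (by omega : ¬ b < N)])
    rw [htA, htB]
    rw [show 2*N+1 = (N+1)+N by omega, Finset.sum_range_add]
    congr 1
    · rw [← Finset.sum_range_reflect (fun k => G Q (2*N) k * hh Q x ((k:ℤ) - N)) (N+1)]
      apply Finset.sum_congr rfl
      intro n hn
      rw [Finset.mem_range] at hn
      have hcond : n ≤ N := by omega
      simp only [hfA, if_pos hcond, Nat.add_sub_cancel]
      congr 1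
      congr 1
      push_cast [Nat.cast_sub hcond]
      omega
    · apply Finset.sum_congr rfl
      intro n hn
      rw [Finset.mem_range] at hn
      simp only [hfB, if_pos hn]
      congr 1
      congr 1
      push_cast
      ring
  have h2Ntend : Tendsto (fun N : ℕ => 2*N) atTop atTop :=
    tendsto_atTop_mono (fun N => by simp [id]; omega) tendsto_id
  have hPP : P / (P * P) = P⁻¹ := by field_simp
  -- limit of the A part
  have hA_tend : Tendsto (fun N => ∑' n, fA N n) atTop
      (𝓝 (∑' n : ℕ, P⁻¹ * hh Q x (-(n:ℤ)))) := by
    apply tendsto_tsum_of_dominated_convergence (f := fA)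
      (g := fun n : ℕ => P⁻¹ * hh Q x (-(n:ℤ)))
      (bound := fun n => (c*c)⁻¹ * |hh Q x (-(n:ℤ))|)
    · apply Summable.congr (((sum1 hQ0 hQ1 hx0).mul_left ((c*c)⁻¹)))
      intro n
      rw [abs_hh_neg hQ0 hx0]
    · intro n
      have hG : Tendsto (fun N => E Q (2*N) / (E Q (N-n) * E Q (N+n))) atTop
          (𝓝 (P / (P*P))) :=
        Tendsto.div (hEP.comp h2Ntend)
          ((hEP.comp (tendsto_sub_atTop_nat n)).mul (hEP.comp (tendsto_add_atTop_nat n)))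
          (mul_pos hP0 hP0).ne'
      rw [hPP] at hG
      apply (hG.mul_const (hh Q x (-(n:ℤ)))).congr'
      filter_upwards [eventually_ge_atTop n] with N hN
      simp only [hfA, if_pos hN]
      rw [hGf (2*N) (N-n) (by omega), show 2*N - (N-n) = N+n by omega]
    · apply Eventually.of_forall
      intro N n
      by_cases hn : n ≤ N
      · simp only [hfA, if_pos hn, Real.norm_eq_abs, abs_mul]
        exact mul_le_mul_of_nonneg_right (hGbound (2*N) (N-n) (by omega)) (abs_nonneg _)
      · simp only [hfA, if_neg hn, norm_zero]
        positivity
  -- limit of the B part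
  have hB_tend : Tendsto (fun N => ∑' n, fB N n) atTop
      (𝓝 (∑' n : ℕ, P⁻¹ * hh Q x ((n:ℤ)+1))) := by
    apply tendsto_tsum_of_dominated_convergence (f := fB)
      (g := fun n : ℕ => P⁻¹ * hh Q x ((n:ℤ)+1))
      (bound := fun n => (c*c)⁻¹ * |hh Q x ((n:ℤ)+1)|)
    · apply Summable.congr ((((sum2 hQ0 hQ1 hx0 hx1).mul_left x).mul_left ((c*c)⁻¹)))
      intro n
      rw [abs_hh_pos hQ0 hx0]
    · intro n
      have hG : Tendsto (fun N => E Q (2*N) / (E Q (N+1+n) * E Q (N-(n+1)))) atTop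
          (𝓝 (P / (P*P))) := by
        refine Tendsto.div (hEP.comp h2Ntend)
          (Tendsto.mul (hEP.comp ?_) (hEP.comp (tendsto_sub_atTop_nat (n+1))))
          (mul_pos hP0 hP0).ne'
        have h1 := tendsto_add_atTop_nat (1+n)
        apply h1.congr
        intro N
        omega
      rw [hPP] at hG
      apply (hG.mul_const (hh Q x ((n:ℤ)+1))).congr'
      filter_upwards [eventually_ge_atTop (n+1)] with N hN
      simp only [hfB, if_pos (by omega : n < N)]
      rw [hGf (2*N) (N+1+n) (by omega), show 2*N - (N+1+n) = N-(n+1) by omega]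
    · apply Eventually.of_forall
      intro N n
      by_cases hn : n < N
      · simp only [hfB, if_pos hn, Real.norm_eq_abs, abs_mul]
        exact mul_le_mul_of_nonneg_right (hGbound (2*N) (N+1+n) (by omega)) (abs_nonneg _)
      · simp only [hfB, if_neg hn, norm_zero]
        positivity
  have hLHS : Tendsto (fun N => ∏ j ∈ range N, ((1 - x*Q^j) * (1 - Q^(j+1)/x))) atTop
      (𝓝 (∏' n : ℕ, ((1 - x*Q^n) * (1 - Q^(n+1)/x)))) := hmA.hasProd.tendsto_prod_nat
  have hRHS : Tendsto (fun N => ∏ j ∈ range N, ((1 - x*Q^j) * (1 - Q^(j+1)/x))) atTop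
      (𝓝 ((∑' n : ℕ, P⁻¹ * hh Q x (-(n:ℤ))) + (∑' n : ℕ, P⁻¹ * hh Q x ((n:ℤ)+1)))) :=
    (hA_tend.add hB_tend).congr (fun N => (hstar' N).symm)
  have heq := tendsto_nhds_unique hLHS hRHS
  rw [heq, tsum_mul_left, tsum_mul_left]
  field_simp

end Main

end

end JTP

open JTP Filter

/-- For real `0 < a < p` and `0 < q < 1`,
`[a, p; q] · ∏_{n ≥ 1} (1 - q^{pn})
  = ∑_{n ≥ 0} (-1)^n q^{p n(n+1)/2 - a n} - q^a ∑_{n ≥ 0} (-1)^n q^{p n(n+1)/2 + a n}`,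
both series converging absolutely (real powers of `q`). -/
theorem stmt5 (a p : ℝ) (ha : 0 < a) (hap : a < p)
    (q : ℝ) (hq0 : 0 < q) (hq1 : q < 1) :
    Summable (fun n : ℕ =>
      |(-1 : ℝ) ^ n * q ^ (p * (n : ℝ) * ((n : ℝ) + 1) / 2 - a * (n : ℝ))|) ∧
    Summable (fun n : ℕ =>
      |(-1 : ℝ) ^ n * q ^ (p * (n : ℝ) * ((n : ℝ) + 1) / 2 + a * (n : ℝ))|) ∧
    (∏' n : ℕ, (1 - q ^ (p * (n : ℝ) + a)) * (1 - q ^ (p * (n : ℝ) + p - a))) *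
      (∏' n : ℕ, (1 - q ^ (p * ((n : ℝ) + 1)))) =
    (∑' n : ℕ, (-1 : ℝ) ^ n * q ^ (p * (n : ℝ) * ((n : ℝ) + 1) / 2 - a * (n : ℝ))) -
      q ^ a * ∑' n : ℕ, (-1 : ℝ) ^ n *
        q ^ (p * (n : ℝ) * ((n : ℝ) + 1) / 2 + a * (n : ℝ)) := by
  set Q : ℝ := q ^ p with hQdef
  set x : ℝ := q ^ a with hxdef
  have hp0 : 0 < p := ha.trans hap
  have hQ0 : 0 < Q := Real.rpow_pos_of_pos hq0 p
  have hQ1 : Q < 1 := Real.rpow_lt_one hq0.le hq1 hp0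
  have hx0 : 0 < x := Real.rpow_pos_of_pos hq0 a
  have hx1 : x < 1 := Real.rpow_lt_one hq0.le hq1 ha
  have hQx : Q < x := Real.rpow_lt_rpow_of_exponent_gt hq0 hq1 hap
  -- power conversions
  have rp : ∀ (t : ℝ) (m : ℕ), (q ^ t) ^ m = q ^ (t * m) := by
    intro t m
    rw [← Real.rpow_natCast (q^t) m, ← Real.rpow_mul hq0.le]
  have hT : ∀ n : ℕ, ((T (n+1) : ℕ) : ℝ) = ((n:ℝ)+1) * n / 2 := by
    intro n
    have h := two_mul_T n
    have h2 : (2 * ((T (n+1) : ℕ):ℝ)) = ((n:ℝ)+1)*n := by exact_mod_cast h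
    linarith
  have c1 : ∀ n : ℕ, q ^ (p * (n : ℝ) + a) = x * Q^n := by
    intro n
    rw [Real.rpow_add hq0, rp p n]
    ring
  have c2 : ∀ n : ℕ, q ^ (p * (n : ℝ) + p - a) = Q^(n+1) / x := by
    intro n
    rw [Real.rpow_sub hq0, rp p (n+1)]
    congr 2
    push_cast
    ring
  have c3 : ∀ n : ℕ, q ^ (p * ((n : ℝ) + 1)) = Q^(n+1) := by
    intro n
    rw [rp p (n+1)]
    congr 1
    push_cast
    ring
  have c4 : ∀ n : ℕ, q ^ (p * (n : ℝ) * ((n : ℝ) + 1) / 2 - a * (n : ℝ))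
      = Q^(T (n+1)) * ((x^n)⁻¹) := by
    intro n
    rw [Real.rpow_sub hq0, rp p (T (n+1)), rp a n, hT n, div_eq_mul_inv]
    congr 2
    ring
  have c5 : ∀ n : ℕ, q ^ (p * (n : ℝ) * ((n : ℝ) + 1) / 2 + a * (n : ℝ))
      = Q^(T (n+1)) * x^n := by
    intro n
    rw [Real.rpow_add hq0, rp p (T (n+1)), rp a n, hT n]
    congr 2
    ring
  refine ⟨?_, ?_, ?_⟩
  · apply (sum1 hQ0 hQ1 hx0).congr
    intro n
    rw [c4 n, abs_mul, abs_pow, abs_neg, abs_one, one_pow, one_mul,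
      abs_of_nonneg (by positivity)]
  · apply ((sum2 hQ0 hQ1 hx0 hx1).congr)
    intro n
    rw [c5 n, abs_mul, abs_pow, abs_neg, abs_one, one_pow, one_mul,
      abs_of_nonneg (by positivity)]
  · have e1 : (∏' n : ℕ, (1 - q ^ (p * (n : ℝ) + a)) * (1 - q ^ (p * (n : ℝ) + p - a)))
        = ∏' n : ℕ, ((1 - x*Q^n) * (1 - Q^(n+1)/x)) :=
      tprod_congr (fun n => by rw [c1 n, c2 n])
    have e2 : (∏' n : ℕ, (1 - q ^ (p * ((n : ℝ) + 1)))) = ∏' n : ℕ, (1 - Q^(n+1)) :=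
      tprod_congr (fun n => by rw [c3 n])
    rw [e1, e2, key hQ0 hQ1 hx0 hQx hx1]
    have e3 : (∑' n : ℕ, hh Q x (-(n:ℤ)))
        = ∑' n : ℕ, (-1 : ℝ) ^ n * q ^ (p * (n : ℝ) * ((n : ℝ) + 1) / 2 - a * (n : ℝ)) :=
      tsum_congr (fun n => by rw [hh_neg hQ0 hx0, c4 n])
    have e4 : (∑' n : ℕ, hh Q x ((n:ℤ)+1))
        = -(x * ∑' n : ℕ, (-1 : ℝ) ^ n *
            q ^ (p * (n : ℝ) * ((n : ℝ) + 1) / 2 + a * (n : ℝ))) := by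
      rw [show (∑' n : ℕ, hh Q x ((n:ℤ)+1)) = ∑' n : ℕ,
          -(x * ((-1:ℝ)^n * q ^ (p * (n : ℝ) * ((n : ℝ) + 1) / 2 + a * (n : ℝ))))
          from tsum_congr (fun n => by rw [hh_pos hQ0 hx0, c5 n])]
      rw [tsum_neg, tsum_mul_left]
    rw [e3, e4]
    ring
end

section
/- Let χ₅ : ℕ → ℝ be the Legendre symbol modulo 5. Then for every real q with 0 < q < 1, ∏_{n=1}^∞ (1 − qⁿ)^{χ₅(n)} = ( ∑_{n∈ℤ} (−1)ⁿ q^{(5n² + 3n)/2} ) / ( ∑_{n∈ℤ} (−1)ⁿ q^{(5n² + n)/2} ), where the denominator is nonzero, the powers of q with real exponents are real powers, and the product on the left uses real-power exponents of positive bases. -/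
open Finset Filter Topology

noncomputable def qc (t : ℝ) (m k : ℕ) : ℝ :=
  (∏ j ∈ range k, (1 - t ^ ((m : ℤ) - j))) / (∏ j ∈ range k, (1 - t ^ (j + 1)))

section qc
variable {t : ℝ} (ht0 : 0 < t) (ht1 : t < 1)
include ht0 ht1

lemma zpow_lt_one' {e : ℤ} (he : 0 < e) : t ^ e < 1 := by
  have : t ^ e = t ^ e.toNat := by rw [← zpow_natCast, Int.toNat_of_nonneg he.le]
  rw [this]
  exact pow_lt_one₀ ht0.le ht1 (by omega)

lemma den_pos (k : ℕ) : 0 < ∏ j ∈ range k, (1 - t ^ (j + 1)) :=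
  Finset.prod_pos fun j _ => by
    have : t ^ (j+1) < 1 := pow_lt_one₀ ht0.le ht1 (by omega)
    linarith

omit ht0 ht1 in
lemma qc_zero (m : ℕ) : qc t m 0 = 1 := by simp [qc]

omit ht0 ht1 in
lemma qc_eq_zero {m k : ℕ} (h : m < k) : qc t m k = 0 := by
  have : (∏ j ∈ range k, (1 - t ^ ((m : ℤ) - j))) = 0 :=
    Finset.prod_eq_zero (Finset.mem_range.2 h) (by simp)
  simp [qc, this]

lemma qc_num_mem {m k : ℕ} (h : k ≤ m) :
    0 < (∏ j ∈ range k, (1 - t ^ ((m : ℤ) - j))) ∧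
      (∏ j ∈ range k, (1 - t ^ ((m : ℤ) - j))) ≤ 1 := by
  constructor
  · refine Finset.prod_pos fun j hj => ?_
    have hj' := Finset.mem_range.1 hj
    have : t ^ ((m : ℤ) - j) < 1 := zpow_lt_one' ht0 ht1 (by omega)
    linarith
  · refine Finset.prod_le_one (fun j hj => ?_) (fun j hj => ?_)
    · have hj' := Finset.mem_range.1 hj
      have : t ^ ((m : ℤ) - j) < 1 := zpow_lt_one' ht0 ht1 (by omega)
      linarith
    · have : (0:ℝ) < t ^ ((m : ℤ) - j) := zpow_pos ht0 _
      linarith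

lemma qc_nonneg (m k : ℕ) : 0 ≤ qc t m k := by
  rcases le_or_gt k m with h | h
  · exact div_nonneg (qc_num_mem ht0 ht1 h).1.le (den_pos ht0 ht1 k).le
  · simp [qc_eq_zero h]

lemma qc_le (m k : ℕ) : qc t m k ≤ (∏ j ∈ range k, (1 - t ^ (j + 1)))⁻¹ := by
  rcases le_or_gt k m with h | h
  · rw [qc, div_le_iff₀ (den_pos ht0 ht1 k), inv_mul_cancel₀ (den_pos ht0 ht1 k).ne']
    exact (qc_num_mem ht0 ht1 h).2
  · rw [qc_eq_zero h]
    exact (inv_pos.2 (den_pos ht0 ht1 k)).le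

lemma qc_pascal (m k : ℕ) :
    qc t (m + 1) (k + 1) = qc t m k + t ^ (k + 1) * qc t m (k + 1) := by
  have ht0' : t ≠ 0 := ht0.ne'
  have hden : (∏ j ∈ range k, (1 - t ^ (j + 1))) ≠ 0 := (den_pos ht0 ht1 k).ne'
  have hfac : (1 - t ^ (k + 1)) ≠ 0 := by
    have : t ^ (k+1) < 1 := pow_lt_one₀ ht0.le ht1 (by omega)
    intro h; linarith
  set N : ℝ := ∏ j ∈ range k, (1 - t ^ ((m : ℤ) - j)) with hN
  have hnum1 : (∏ j ∈ range (k+1), (1 - t ^ (((m+1 : ℕ) : ℤ) - j))) = N * (1 - t ^ (m+1)) := by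
    rw [Finset.prod_range_succ']
    have h1 : ∀ j ∈ range k, (1 - t ^ (((m+1 : ℕ) : ℤ) - ((j+1 : ℕ) : ℤ))) = 1 - t ^ ((m:ℤ) - j) := by
      intro j _
      rw [show ((m+1 : ℕ) : ℤ) - ((j+1 : ℕ) : ℤ) = (m : ℤ) - j by push_cast; ring]
    rw [Finset.prod_congr rfl h1,
      show (((m+1 : ℕ) : ℤ) - ((0:ℕ):ℤ)) = (((m+1:ℕ) : ℕ) : ℤ) by push_cast; ring, zpow_natCast]
  have hnum3 : (∏ j ∈ range (k+1), (1 - t ^ ((m : ℤ) - j))) = N * (1 - t ^ ((m:ℤ) - k)) := by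
    rw [Finset.prod_range_succ]
  have hkey : t ^ (k + 1) * t ^ ((m:ℤ) - k) = t ^ (m + 1) := by
    rw [← zpow_natCast t (k+1), ← zpow_add₀ ht0', ← zpow_natCast t (m+1)]
    congr 1
    push_cast; ring
  have hD : (∏ j ∈ range (k+1), (1 - t ^ (j + 1)))
      = (∏ j ∈ range k, (1 - t ^ (j + 1))) * (1 - t ^ (k+1)) := Finset.prod_range_succ _ k
  rw [qc, qc, qc, hnum1, hnum3, hD, ← hN]
  field_simp
  linear_combination N * hkey

end qc

lemma choose_two_succ (k : ℕ) : (k+1).choose 2 = k.choose 2 + k := by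
  simp [Nat.choose_succ_succ, Nat.choose_one_right]; omega

section qb
variable {t : ℝ} (ht0 : 0 < t) (ht1 : t < 1)
include ht0 ht1

theorem qbinom (m : ℕ) (z : ℝ) :
    ∏ j ∈ range m, (1 + t ^ j * z)
      = ∑ k ∈ range (m+1), qc t m k * t ^ (k.choose 2) * z ^ k := by
  induction m generalizing z with
  | zero => simp [qc_zero]
  | succ m ih =>
    have hL : ∏ j ∈ range (m+1), (1 + t ^ j * z)
        = (∑ k ∈ range (m+1), qc t m k * t ^ (k.choose 2) * (t*z) ^ k) * (1 + z) := by
      rw [Finset.prod_range_succ',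
        Finset.prod_congr rfl (fun j (_ : j ∈ range m) => (by ring :
          (1 : ℝ) + t ^ (j+1) * z = 1 + t ^ j * (t*z))), ih (t*z)]
      norm_num
    rw [hL,
      Finset.sum_congr rfl (fun k (_ : k ∈ range (m+1)) => (by rw [mul_pow, pow_add]; ring :
        qc t m k * t ^ (k.choose 2) * (t*z) ^ k = qc t m k * t ^ (k.choose 2 + k) * z ^ k)),
      mul_add, mul_one, Finset.sum_mul,
      Finset.sum_congr rfl (fun k (_ : k ∈ range (m+1)) => (by rw [pow_succ]; ring :
        (qc t m k * t ^ (k.choose 2 + k) * z ^ k) * z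
          = qc t m k * t ^ (k.choose 2 + k) * z ^ (k+1)))]
    have hB : (∑ k ∈ range (m+1), qc t m k * t ^ (k.choose 2 + k) * z ^ k)
        = (∑ k ∈ range m, qc t m (k+1) * t ^ ((k+1).choose 2 + (k+1)) * z ^ (k+1)) + 1 := by
      rw [Finset.sum_range_succ']
      simp [qc_zero]
    have hR : ∑ k ∈ range (m+1+1), qc t (m+1) k * t ^ (k.choose 2) * z ^ k
        = (∑ k ∈ range (m+1), qc t m k * t ^ (k.choose 2 + k) * z ^ (k+1))
          + ((∑ k ∈ range (m+1), t^(k+1) * qc t m (k+1) * t ^ (k.choose 2 + k) * z ^ (k+1)) + 1) := by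
      rw [Finset.sum_range_succ']
      have : ∀ k ∈ range (m+1), qc t (m+1) (k+1) * t ^ ((k+1).choose 2) * z ^ (k+1)
          = qc t m k * t ^ (k.choose 2 + k) * z ^ (k+1)
            + t^(k+1) * qc t m (k+1) * t ^ (k.choose 2 + k) * z ^ (k+1) := by
        intro k _
        rw [qc_pascal ht0 ht1, choose_two_succ]
        ring
      rw [Finset.sum_congr rfl this, Finset.sum_add_distrib]
      simp [qc_zero]
      ring
    rw [hB, hR]
    have hQ : (∑ k ∈ range m, qc t m (k+1) * t ^ ((k+1).choose 2 + (k+1)) * z ^ (k+1))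
        = ∑ k ∈ range (m+1), t^(k+1) * qc t m (k+1) * t ^ (k.choose 2 + k) * z ^ (k+1) := by
      rw [Finset.sum_range_succ, qc_eq_zero (by omega : m < m + 1)]
      rw [Finset.sum_congr rfl (fun k (_ : k ∈ range m) => (by
        rw [choose_two_succ, pow_add, pow_add, pow_add] ; ring :
        qc t m (k+1) * t ^ ((k+1).choose 2 + (k+1)) * z ^ (k+1)
          = t^(k+1) * qc t m (k+1) * t ^ (k.choose 2 + k) * z ^ (k+1)))]
      ring
    rw [hQ]
    ring

end qb
lemma sum_odd (N : ℕ) : ∑ j ∈ range N, (2*j+1) = N*N := by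
  induction N with
  | zero => simp
  | succ n ih => rw [Finset.sum_range_succ, ih]; ring

lemma two_choose_two (k : ℕ) : 2 * k.choose 2 + k = k*k := by
  induction k with
  | zero => simp
  | succ n ih => rw [choose_two_succ]; ring_nf; ring_nf at ih; omega

theorem finite_jtp {x : ℝ} (hx0 : 0 < x) (hx1 : x < 1) {y : ℝ} (hy : y ≠ 0) (N : ℕ) :
    (∏ j ∈ range N, (1 + x^(2*j+1) * y)) * (∏ j ∈ range N, (1 + x^(2*j+1) * y⁻¹))
      = ∑ k ∈ range (2*N+1),
          qc (x^2) (2*N) k * x ^ (((k:ℤ) - N)^2) * y ^ ((k:ℤ) - N) := by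
  have hx0' : x ≠ 0 := hx0.ne'
  have ht0 : (0:ℝ) < x^2 := by positivity
  have ht1 : x^2 < 1 := by nlinarith
  have step1 := qbinom ht0 ht1 (2*N) (x ^ ((1:ℤ) - 2*N) * y)
  have hterm : ∀ j ∈ range (2*N), 1 + (x^2) ^ j * (x ^ ((1:ℤ) - 2*N) * y)
      = 1 + x ^ ((2*j+1 : ℤ) - 2*N) * y := by
    intro j _
    have h : (x^2 : ℝ) ^ j * x ^ ((1:ℤ) - 2*N) = x ^ ((2*j+1 : ℤ) - 2*N) := by
      rw [← pow_mul, ← zpow_natCast x (2*j), ← zpow_add₀ hx0']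
      congr 1; push_cast; ring
    rw [← h]; ring
  rw [Finset.prod_congr rfl hterm] at step1
  have hsplit : (∏ j ∈ range (2*N), (1 + x ^ ((2*j+1 : ℤ) - 2*N) * y))
      = ((x^(N*N))⁻¹ * y^N * ∏ j ∈ range N, (1 + x^(2*j+1) * y⁻¹))
          * ∏ j ∈ range N, (1 + x^(2*j+1) * y) := by
    rw [show (2*N) = N + N by ring, Finset.prod_range_add]
    congr 1
    · rw [← Finset.prod_range_reflect]
      have href : ∀ j ∈ range N, 1 + x ^ ((2*((N - 1 - j : ℕ) : ℤ)+1 : ℤ) - 2*N) * y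
          = (x^(2*j+1))⁻¹ * y * (1 + x^(2*j+1) * y⁻¹) := by
        intro j hj
        have hjN := Finset.mem_range.1 hj
        have he : ((2*((N - 1 - j : ℕ) : ℤ)+1 : ℤ) - 2*N) = -((2*j+1 : ℕ) : ℤ) := by omega
        rw [he, zpow_neg, zpow_natCast]
        have hxp : (x^(2*j+1)) ≠ 0 := pow_ne_zero _ hx0'
        field_simp
        ring
      rw [Finset.prod_congr rfl href, Finset.prod_mul_distrib, Finset.prod_mul_distrib,
          Finset.prod_const, Finset.prod_inv_distrib, Finset.prod_pow_eq_pow_sum, sum_odd,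
          Finset.card_range]
    · apply Finset.prod_congr rfl
      intro j _
      rw [show ((2*((N+j:ℕ):ℤ)+1 : ℤ) - 2*N) = ((2*j+1 : ℕ) : ℤ) by push_cast; ring, zpow_natCast]
  rw [hsplit] at step1
  have hyN : (y:ℝ)^N ≠ 0 := pow_ne_zero _ hy
  have hxNN : (x:ℝ)^(N*N) ≠ 0 := pow_ne_zero _ hx0'
  have hRHS : (∑ k ∈ range (2*N+1),
          qc (x^2) (2*N) k * x ^ (((k:ℤ) - N)^2) * y ^ ((k:ℤ) - N))
      = x^(N*N) * (y^N)⁻¹ * ∑ k ∈ range (2*N+1),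
          qc (x^2) (2*N) k * (x^2) ^ (k.choose 2) * (x ^ ((1:ℤ) - 2*N) * y)^k := by
    rw [Finset.mul_sum]
    apply Finset.sum_congr rfl
    intro k _
    have hyk : (y : ℝ) ^ ((k:ℤ) - N) = (y^N)⁻¹ * y^k := by
      rw [zpow_sub₀ hy, zpow_natCast, zpow_natCast, div_eq_mul_inv]; ring
    have hxk : x ^ (((k:ℤ) - N)^2)
        = x^(N*N) * ((x^2) ^ (k.choose 2) * (x ^ ((1:ℤ) - 2*N))^k) := by
      rw [← pow_mul, ← zpow_natCast x (N*N), ← zpow_natCast x (2 * k.choose 2),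
        ← zpow_natCast (x ^ ((1:ℤ) - 2*N)) k, ← zpow_mul, ← zpow_add₀ hx0', ← zpow_add₀ hx0']
      congr 1
      have h2c : (2 * (k.choose 2) : ℤ) = (k:ℤ)*k - k := by
        have := two_choose_two k
        push_cast
        omega
      push_cast [h2c]
      ring
    rw [hyk, hxk, mul_pow]
    ring
  rw [hRHS, ← step1]
  field_simp
  ring
lemma prod_one_sub_ge (a : ℕ → ℝ) (s : Finset ℕ) (h0 : ∀ i ∈ s, 0 ≤ a i)
    (h1 : ∀ i ∈ s, a i ≤ 1) : 1 - ∑ i ∈ s, a i ≤ ∏ i ∈ s, (1 - a i) := by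
  classical
  induction s using Finset.induction_on with
  | empty => simp
  | @insert i s hi ih =>
    rw [Finset.prod_insert hi, Finset.sum_insert hi]
    have hi0 := h0 i (Finset.mem_insert_self i s)
    have hi1 := h1 i (Finset.mem_insert_self i s)
    have ih' := ih (fun j hj => h0 j (Finset.mem_insert_of_mem hj))
      (fun j hj => h1 j (Finset.mem_insert_of_mem hj))
    have hs0 : 0 ≤ ∑ j ∈ s, a j :=
      Finset.sum_nonneg fun j hj => h0 j (Finset.mem_insert_of_mem hj)
    nlinarith

lemma hasProd_of_le_one (f : ℕ → ℝ) (h0 : ∀ i, 0 < f i) (h1 : ∀ i, f i ≤ 1) :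
    HasProd f (⨅ s : Finset ℕ, ∏ i ∈ s, f i) := by
  classical
  have hbdd : BddBelow (Set.range fun s : Finset ℕ => ∏ i ∈ s, f i) := by
    refine ⟨0, ?_⟩
    rintro p ⟨s, rfl⟩
    exact Finset.prod_nonneg fun i _ => (h0 i).le
  have hanti : Antitone (fun s : Finset ℕ => ∏ i ∈ s, f i) := by
    intro s u hsu
    dsimp only
    rw [← Finset.prod_sdiff hsu]
    have hle1 : ∏ i ∈ u \ s, f i ≤ 1 :=
      Finset.prod_le_one (fun i _ => (h0 i).le) (fun i _ => h1 i)
    have hpos : (0:ℝ) ≤ ∏ i ∈ s, f i := Finset.prod_nonneg fun i _ => (h0 i).le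
    nlinarith
  exact tendsto_atTop_ciInf hanti hbdd

lemma tprod_le_prod (f : ℕ → ℝ) (h0 : ∀ i, 0 < f i) (h1 : ∀ i, f i ≤ 1) (s : Finset ℕ) :
    ∏' i, f i ≤ ∏ i ∈ s, f i := by
  classical
  rw [(hasProd_of_le_one f h0 h1).tprod_eq]
  refine ciInf_le ⟨0, ?_⟩ s
  rintro p ⟨u, rfl⟩
  exact Finset.prod_nonneg fun i _ => (h0 i).le

lemma tprod_one_sub_pos (a : ℕ → ℝ) (h0 : ∀ i, 0 ≤ a i) (h1 : ∀ i, a i < 1)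
    (hs : Summable a) : 0 < ∏' i, (1 - a i) := by
  classical
  have hf0 : ∀ i, 0 < 1 - a i := fun i => by linarith [h1 i]
  have hf1 : ∀ i, 1 - a i ≤ 1 := fun i => by linarith [h0 i]
  rw [(hasProd_of_le_one _ hf0 hf1).tprod_eq]
  obtain ⟨K, hK⟩ : ∃ K : ℕ, ∑' k : ℕ, a (k + K) < 1/2 :=
    ((tendsto_sum_nat_add a).eventually (gt_mem_nhds (by norm_num : (0:ℝ) < 1/2))).exists
  have hsK : Summable fun k => a (k + K) := (summable_nat_add_iff K).2 hs
  have hC : (0:ℝ) < ∏ i ∈ Finset.range K, (1 - a i) :=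
    Finset.prod_pos fun i _ => hf0 i
  have hlow : ∀ s : Finset ℕ, (∏ i ∈ Finset.range K, (1 - a i)) * (1/2) ≤ ∏ i ∈ s, (1 - a i) := by
    intro s
    rw [← Finset.prod_inter_mul_prod_diff s (Finset.range K)]
    have h1' : ∏ i ∈ Finset.range K, (1 - a i) ≤ ∏ i ∈ s ∩ Finset.range K, (1 - a i) := by
      have hsub : s ∩ Finset.range K ⊆ Finset.range K := Finset.inter_subset_right
      rw [← Finset.prod_sdiff hsub]
      have : ∏ i ∈ Finset.range K \ (s ∩ Finset.range K), (1 - a i) ≤ 1 :=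
        Finset.prod_le_one (fun i _ => (hf0 i).le) (fun i _ => hf1 i)
      nlinarith [Finset.prod_nonneg (fun i (_ : i ∈ s ∩ Finset.range K) => (hf0 i).le),
        Finset.prod_pos (fun i (_ : i ∈ Finset.range K \ (s ∩ Finset.range K)) => hf0 i)]
    have h2' : (1:ℝ)/2 ≤ ∏ i ∈ s \ Finset.range K, (1 - a i) := by
      have hsum : ∑ i ∈ s \ Finset.range K, a i ≤ ∑' k : ℕ, a (k + K) := by
        have himg : ∑ i ∈ s \ Finset.range K, a i
            = ∑ j ∈ (s \ Finset.range K).image (· - K), a (j + K) := by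
          rw [Finset.sum_image]
          · apply Finset.sum_congr rfl
            intro i hi
            have : K ≤ i := by
              have := Finset.mem_sdiff.1 hi
              simpa [Finset.mem_range, not_lt] using this.2
            congr 1; omega
          · intro i hi j hj hij
            have hi' : K ≤ i := by
              have := Finset.mem_sdiff.1 hi
              simpa [Finset.mem_range, not_lt] using this.2
            have hj' : K ≤ j := by
              have := Finset.mem_sdiff.1 hj
              simpa [Finset.mem_range, not_lt] using this.2
            beta_reduce at hij
            omega
        rw [himg]
        exact hsK.sum_le_tsum _ (fun i _ => h0 _)
      have := prod_one_sub_ge a (s \ Finset.range K) (fun i _ => h0 i)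
        (fun i _ => (h1 i).le)
      linarith
    calc (∏ i ∈ Finset.range K, (1 - a i)) * (1/2)
        ≤ (∏ i ∈ s ∩ Finset.range K, (1 - a i)) * ∏ i ∈ s \ Finset.range K, (1 - a i) := by
          apply mul_le_mul h1' h2' (by norm_num)
            (Finset.prod_nonneg fun i _ => (hf0 i).le)
      _ = _ := rfl
  have : (∏ i ∈ Finset.range K, (1 - a i)) * (1/2)
      ≤ ⨅ s : Finset ℕ, ∏ i ∈ s, (1 - a i) := le_ciInf hlow
  nlinarith
lemma summable_sq (x w : ℝ) (hx0 : 0 < x) (hx1 : x < 1) (hw : 0 < w) :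
    Summable (fun n : ℕ => x ^ (n*n) * w ^ n) := by
  obtain ⟨M, hM⟩ : ∃ M : ℕ, x ^ M * w < 1 := by
    have h := (tendsto_pow_atTop_nhds_zero_of_lt_one hx0.le hx1).eventually
      (gt_mem_nhds (show (0:ℝ) < w⁻¹ by positivity))
    obtain ⟨M, hM⟩ := h.exists
    exact ⟨M, by rwa [← lt_div_iff₀ hw, div_eq_mul_inv, one_mul]⟩
  rw [← summable_nat_add_iff M]
  refine Summable.of_nonneg_of_le (fun n => by positivity) (fun n => ?_)
    (summable_geometric_of_lt_one (r := x^M * w) (by positivity) hM)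
  have key : x ^ ((n+M)*(n+M)) * w ^ (n+M)
      = x ^ (n*n) * (x^(n+M) * w)^M * (x^M * w)^n := by
    rw [mul_pow, mul_pow, ← pow_mul, ← pow_mul]
    rw [show (n+M)*(n+M) = n*n + (n+M)*M + M*n by ring, pow_add, pow_add, pow_add]
    ring
  rw [key]
  have hb1 : x ^ (n*n) ≤ 1 := pow_le_one₀ hx0.le hx1.le
  have hb2 : (x^(n+M) * w)^M ≤ 1 := by
    apply pow_le_one₀ (by positivity)
    calc x^(n+M) * w ≤ x^M * w := by
          apply mul_le_mul_of_nonneg_right _ hw.le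
          exact pow_le_pow_of_le_one hx0.le hx1.le (by omega)
      _ ≤ 1 := hM.le
  have hc : (0:ℝ) ≤ (x^M * w)^n := by positivity
  calc x ^ (n*n) * (x^(n+M) * w)^M * (x^M * w)^n
      ≤ 1 * 1 * (x^M * w)^n := by
        apply mul_le_mul (mul_le_mul hb1 hb2 (by positivity) (by norm_num)) le_rfl hc
        norm_num
    _ = (x^M * w)^n := by ring

lemma summable_sq_int (x w : ℝ) (hx0 : 0 < x) (hx1 : x < 1) (hw : 0 < w) :
    Summable (fun n : ℤ => x ^ (n^2) * w ^ n) := by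
  apply Summable.of_nat_of_neg
  · apply ((summable_sq x w hx0 hx1 hw).congr)
    intro n
    rw [show ((n:ℤ)^2) = ((n*n : ℕ) : ℤ) by push_cast; ring, zpow_natCast, zpow_natCast]
  · apply ((summable_sq x w⁻¹ hx0 hx1 (by positivity)).congr)
    intro n
    rw [show ((-(n:ℤ))^2) = ((n*n : ℕ) : ℤ) by push_cast; ring, zpow_natCast,
      ← zpow_natCast w⁻¹ n, inv_zpow, ← zpow_neg]

theorem jtp_s13 {x w : ℝ} (hx0 : 0 < x) (hx1 : x < 1) (hw : 0 < w)
    (h1 : x * w < 1) (h2 : x * w⁻¹ < 1) :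
    (∑' n : ℤ, (-1:ℝ) ^ n * (x ^ (n^2) * w ^ n))
      = (∏' j : ℕ, (1 - x^(2*j+2)))
        * ((∏' j : ℕ, (1 - x^(2*j+1) * w)) * (∏' j : ℕ, (1 - x^(2*j+1) * w⁻¹))) := by
  classical
  have hx0' : x ≠ 0 := hx0.ne'
  have ht0 : (0:ℝ) < x^2 := by positivity
  have ht1 : x^2 < 1 := by nlinarith
  set t : ℝ := x^2 with htdef
  -- the Euler factor
  have hPf0 : ∀ j : ℕ, 0 < 1 - t ^ (j+1) := fun j => by
    have : t^(j+1) < 1 := pow_lt_one₀ ht0.le ht1 (by omega)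
    linarith
  have hPf1 : ∀ j : ℕ, 1 - t ^ (j+1) ≤ 1 := fun j => by
    have : (0:ℝ) < t^(j+1) := by positivity
    linarith
  have hPm : Multipliable (fun j : ℕ => 1 - t ^ (j+1)) :=
    (hasProd_of_le_one _ hPf0 hPf1).multipliable
  set P : ℝ := ∏' j : ℕ, (1 - t ^ (j+1)) with hPdef
  have hsumgeo : Summable (fun j : ℕ => t ^ (j+1)) := by
    apply ((summable_geometric_of_lt_one ht0.le ht1).mul_right t).congr
    intro j; rw [pow_succ]
  have hPpos : 0 < P :=
    tprod_one_sub_pos _ (fun j => by positivity) (fun j => by linarith [hPf0 j]) hsumgeo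
  have hPle : ∀ k : ℕ, P ≤ ∏ j ∈ range k, (1 - t ^ (j+1)) :=
    fun k => tprod_le_prod _ hPf0 hPf1 (range k)
  -- the two factor families
  have hfac1 : ∀ j : ℕ, 0 < 1 - x^(2*j+1) * w ∧ 1 - x^(2*j+1) * w ≤ 1 := by
    intro j
    have hle : x^(2*j+1) * w ≤ x * w :=
      mul_le_mul_of_nonneg_right (pow_le_of_le_one hx0.le hx1.le (by omega)) hw.le
    have hpos : (0:ℝ) < x^(2*j+1) * w := by positivity
    constructor <;> nlinarith
  have hfac2 : ∀ j : ℕ, 0 < 1 - x^(2*j+1) * w⁻¹ ∧ 1 - x^(2*j+1) * w⁻¹ ≤ 1 := by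
    intro j
    have hw' : (0:ℝ) < w⁻¹ := by positivity
    have hle : x^(2*j+1) * w⁻¹ ≤ x * w⁻¹ :=
      mul_le_mul_of_nonneg_right (pow_le_of_le_one hx0.le hx1.le (by omega)) hw'.le
    have hpos : (0:ℝ) < x^(2*j+1) * w⁻¹ := by positivity
    constructor <;> nlinarith
  set g : ℕ → ℝ := fun j => (1 - x^(2*j+1) * w) * (1 - x^(2*j+1) * w⁻¹) with hgdef
  have hg0 : ∀ j, 0 < g j := fun j => mul_pos (hfac1 j).1 (hfac2 j).1
  have hg1 : ∀ j, g j ≤ 1 := fun j => by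
    have h1' := (hfac1 j).1; have h2' := (hfac1 j).2
    have h3' := (hfac2 j).1; have h4' := (hfac2 j).2
    simp only [hgdef]
    nlinarith
  have hGm : Multipliable g := (hasProd_of_le_one _ hg0 hg1).multipliable
  set G : ℝ := ∏' j, g j with hGdef
  have hFG : Tendsto (fun N => ∏ j ∈ range N, g j) atTop (𝓝 G) :=
    hGm.hasProd.tendsto_prod_nat
  -- the coefficient family
  set A : ℕ → ℤ → ℝ := fun N n =>
    if 0 ≤ (N:ℤ) + n then qc t (2*N) ((N:ℤ) + n).toNat * x ^ (n^2) * (-w) ^ n else 0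
    with hAdef
  have habs : ∀ n : ℤ, |(-w:ℝ) ^ n| = w ^ n := by
    intro n
    rw [show (-w : ℝ) = (-1) * w by ring, mul_zpow, abs_mul]
    have h1 : |(-1:ℝ)^n| = 1 := by
      rcases Int.even_or_odd n with h | h
      · rw [h.neg_one_zpow]; norm_num
      · rw [Odd.neg_one_zpow h]; norm_num
    rw [h1, one_mul, abs_of_pos (zpow_pos hw n)]
  -- F_N = ∑' A N
  have hFA : ∀ N : ℕ, ∏ j ∈ range N, g j = ∑' n : ℤ, A N n := by
    intro N
    have hvan : ∀ n : ℤ, n ∉ Finset.Icc (-(N:ℤ)) N → A N n = 0 := by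
      intro n hn
      rw [Finset.mem_Icc] at hn
      simp only [hAdef]
      by_cases hc : 0 ≤ (N:ℤ) + n
      · rw [if_pos hc, qc_eq_zero (by omega : 2*N < ((N:ℤ)+n).toNat)]
        ring
      · rw [if_neg hc]
    rw [tsum_eq_sum hvan]
    have hfj := finite_jtp hx0 hx1 (neg_ne_zero.2 hw.ne') N
    have hgre : ∀ j ∈ range N, g j
        = (1 + x^(2*j+1) * (-w)) * (1 + x^(2*j+1) * (-w)⁻¹) := by
      intro j _
      simp only [hgdef]
      rw [inv_neg]
      ring
    rw [Finset.prod_congr rfl hgre, Finset.prod_mul_distrib, hfj]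
    refine Finset.sum_nbij' (fun k => (k:ℤ) - N) (fun n => ((N:ℤ) + n).toNat) ?_ ?_ ?_ ?_ ?_
    · intro k hk
      rw [Finset.mem_range] at hk
      simp only [Finset.mem_Icc]
      omega
    · intro n hn
      rw [Finset.mem_Icc] at hn
      simp only [Finset.mem_range]
      omega
    · intro k hk
      rw [Finset.mem_range] at hk
      omega
    · intro n hn
      rw [Finset.mem_Icc] at hn
      omega
    · intro k hk
      rw [Finset.mem_range] at hk
      simp only [hAdef]
      rw [if_pos (by omega : (0:ℤ) ≤ (N:ℤ) + ((k:ℤ) - N))]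
      have h' : (((N:ℤ) + ((k:ℤ) - N)).toNat) = k := by omega
      rw [h']
  -- pointwise limit of the coefficients
  have hqc_lim : ∀ n : ℤ, Tendsto (fun N : ℕ => qc t (2*N) (((N:ℤ)+n).toNat)) atTop (𝓝 P⁻¹) := by
    intro n
    have hk : Tendsto (fun N : ℕ => (((N:ℤ)+n).toNat)) atTop atTop :=
      tendsto_atTop.2 fun b => eventually_atTop.2 ⟨b + n.natAbs, fun N hN => by omega⟩
    have hDen : Tendsto (fun N : ℕ => ∏ j ∈ range (((N:ℤ)+n).toNat), (1 - t ^ (j+1)))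
        atTop (𝓝 P) := (hPm.hasProd.tendsto_prod_nat).comp hk
    have hNum : Tendsto (fun N : ℕ =>
        ∏ j ∈ range (((N:ℤ)+n).toNat), (1 - t ^ (((2*N : ℕ):ℤ) - j))) atTop (𝓝 1) := by
      have hup : ∀ᶠ N : ℕ in atTop, (∏ j ∈ range (((N:ℤ)+n).toNat),
          (1 - t ^ (((2*N : ℕ):ℤ) - j))) ≤ 1 := by
        filter_upwards [eventually_atTop.2 ⟨n.natAbs, fun N hN => hN⟩] with N hN
        apply Finset.prod_le_one
        · intro j hj
          rw [Finset.mem_range] at hj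
          have : t ^ (((2*N : ℕ):ℤ) - j) < 1 := zpow_lt_one' ht0 ht1 (by omega)
          linarith
        · intro j hj
          have : (0:ℝ) < t ^ (((2*N : ℕ):ℤ) - j) := zpow_pos ht0 _
          linarith
      have hlo : ∀ᶠ N : ℕ in atTop, 1 - t ^ ((N:ℤ) - n + 1) * (1-t)⁻¹
          ≤ ∏ j ∈ range (((N:ℤ)+n).toNat), (1 - t ^ (((2*N : ℕ):ℤ) - j)) := by
        filter_upwards [eventually_atTop.2 ⟨n.natAbs, fun N hN => hN⟩] with N hN
        set k : ℕ := (((N:ℤ)+n).toNat) with hkdef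
        have hk2N : (k:ℤ) = (N:ℤ) + n := by omega
        have hge := prod_one_sub_ge (fun j => t ^ (((2*N : ℕ):ℤ) - j)) (range k)
          (fun j _ => (zpow_pos ht0 _).le)
          (fun j hj => by
            rw [Finset.mem_range] at hj
            exact (zpow_lt_one' ht0 ht1 (by omega)).le)
        have hsum : ∑ j ∈ range k, t ^ (((2*N : ℕ):ℤ) - j)
            ≤ t ^ ((N:ℤ) - n + 1) * (1-t)⁻¹ := by
          have hterm : ∀ j ∈ range k, t ^ (((2*N : ℕ):ℤ) - j)
              = t ^ ((N:ℤ) - n + 1) * t ^ ((k - 1 - j : ℕ)) := by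
            intro j hj
            rw [Finset.mem_range] at hj
            rw [← zpow_natCast t (k - 1 - j), ← zpow_add₀ ht0.ne']
            congr 1
            omega
          rw [Finset.sum_congr rfl hterm, ← Finset.mul_sum]
          apply mul_le_mul_of_nonneg_left _ (zpow_pos ht0 _).le
          rw [Finset.sum_range_reflect]
          calc (∑ j ∈ range k, t ^ j) ≤ ∑' j : ℕ, t ^ j :=
                (summable_geometric_of_lt_one ht0.le ht1).sum_le_tsum _
                  (fun j _ => by positivity)
            _ = (1-t)⁻¹ := tsum_geometric_of_lt_one ht0.le ht1
        linarith
      have hL : Tendsto (fun N : ℕ => 1 - t ^ ((N:ℤ) - n + 1) * (1-t)⁻¹) atTop (𝓝 1) := by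
        have hre : ∀ N : ℕ, t ^ ((N:ℤ) - n + 1) = t ^ (1 - n) * t ^ N := by
          intro N
          rw [← zpow_natCast t N, ← zpow_add₀ ht0.ne']
          congr 1; ring
        have : Tendsto (fun N : ℕ => t ^ (1 - n) * t ^ N * (1-t)⁻¹) atTop (𝓝 0) := by
          have h0 : Tendsto (fun N : ℕ => t ^ N) atTop (𝓝 0) :=
            tendsto_pow_atTop_nhds_zero_of_lt_one ht0.le ht1
          have := (h0.const_mul (t ^ ((1:ℤ) - n))).mul_const (1-t)⁻¹
          simpa using this
        have := this.const_sub 1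
        simp only [sub_zero] at this
        apply this.congr
        intro N
        rw [hre]
      exact tendsto_of_tendsto_of_tendsto_of_le_of_le' hL tendsto_const_nhds hlo hup
    have := hNum.div hDen hPpos.ne'
    rw [one_div] at this
    apply this.congr
    intro N
    rw [Pi.div_apply, qc]
  -- pointwise limits of A
  have hA_lim : ∀ n : ℤ, Tendsto (fun N => A N n) atTop (𝓝 (P⁻¹ * x ^ (n^2) * (-w) ^ n)) := by
    intro n
    have h0 := ((hqc_lim n).mul_const (x ^ (n^2))).mul_const ((-w) ^ n)
    apply h0.congr'
    filter_upwards [eventually_atTop.2 ⟨n.natAbs, fun N hN => hN⟩] with N hN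
    simp only [hAdef]
    rw [if_pos (by omega : (0:ℤ) ≤ (N:ℤ) + n)]
  -- domination
  have hbound : ∀ (N : ℕ) (n : ℤ), ‖A N n‖ ≤ P⁻¹ * (x ^ (n^2) * w ^ n) := by
    intro N n
    have hpos : (0:ℝ) < x ^ (n^2) := zpow_pos hx0 _
    have hwn : (0:ℝ) < w ^ n := zpow_pos hw _
    simp only [hAdef]
    by_cases hc : 0 ≤ (N:ℤ) + n
    · rw [if_pos hc]
      have hqnn := qc_nonneg ht0 ht1 (2*N) (((N:ℤ)+n).toNat)
      have hqle : qc t (2*N) (((N:ℤ)+n).toNat) ≤ P⁻¹ := by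
        refine le_trans (qc_le ht0 ht1 _ _) ?_
        exact inv_anti₀ hPpos (hPle _)
      rw [Real.norm_eq_abs, abs_mul, abs_mul, habs n,
        abs_of_nonneg hqnn, abs_of_pos hpos]
      calc qc t (2*N) (((N:ℤ)+n).toNat) * x ^ (n^2) * w ^ n
          ≤ P⁻¹ * x ^ (n^2) * w ^ n := by
            apply mul_le_mul_of_nonneg_right _ hwn.le
            exact mul_le_mul_of_nonneg_right hqle hpos.le
        _ = P⁻¹ * (x ^ (n^2) * w ^ n) := by ring
    · rw [if_neg hc]
      simp only [norm_zero]
      positivity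
  have hbsum : Summable (fun n : ℤ => P⁻¹ * (x ^ (n^2) * w ^ n)) :=
    (summable_sq_int x w hx0 hx1 hw).mul_left P⁻¹
  have hkey := tendsto_tsum_of_dominated_convergence hbsum hA_lim
    (Eventually.of_forall hbound)
  -- identify limits
  have hkey' : Tendsto (fun N => ∏ j ∈ range N, g j) atTop
      (𝓝 (∑' n : ℤ, P⁻¹ * x ^ (n^2) * (-w) ^ n)) := by
    apply hkey.congr
    intro N
    exact (hFA N).symm
  have hGeq : G = ∑' n : ℤ, P⁻¹ * x ^ (n^2) * (-w) ^ n :=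
    tendsto_nhds_unique hFG hkey'
  have hsum_rw : (∑' n : ℤ, P⁻¹ * x ^ (n^2) * (-w) ^ n)
      = P⁻¹ * ∑' n : ℤ, (-1:ℝ) ^ n * (x ^ (n^2) * w ^ n) := by
    rw [← tsum_mul_left]
    apply tsum_congr
    intro n
    rw [show (-w : ℝ) = (-1) * w by ring, mul_zpow]
    ring
  -- conclude
  have hfinal : (∑' n : ℤ, (-1:ℝ) ^ n * (x ^ (n^2) * w ^ n)) = P * G := by
    rw [hGeq, hsum_rw]
    field_simp
  rw [hfinal]
  congr 1
  · rw [hPdef]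
    apply tprod_congr
    intro j
    have h22 : 2*(j+1) = 2*j+2 := by ring
    rw [htdef, ← pow_mul, h22]
  · rw [hGdef]
    simp only [hgdef]
    exact Multipliable.tprod_mul ((hasProd_of_le_one _ (fun j => (hfac1 j).1) (fun j => (hfac1 j).2)).multipliable)
      ((hasProd_of_le_one _ (fun j => (hfac2 j).1) (fun j => (hfac2 j).2)).multipliable)

lemma hasProd_inv {f : ℕ → ℝ} {a : ℝ} (hf : HasProd f a) (ha : a ≠ 0) :
    HasProd (fun i => (f i)⁻¹) a⁻¹ := by
  have h2 := Filter.Tendsto.inv₀ hf ha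
  exact h2.congr fun s => by rw [← Finset.prod_inv_distrib]

lemma euler_facts (q : ℝ) (hq0 : 0 < q) (hq1 : q < 1) (c : ℕ) (hc : c ≠ 0) :
    HasProd (fun j : ℕ => 1 - q ^ (5*j+c)) (∏' j : ℕ, (1 - q ^ (5*j+c)))
      ∧ 0 < ∏' j : ℕ, (1 - q ^ (5*j+c)) := by
  have h0 : ∀ j : ℕ, q^(5*j+c) < 1 := fun j => pow_lt_one₀ hq0.le hq1 (by omega)
  have h1 : ∀ j : ℕ, (0:ℝ) < q^(5*j+c) := fun j => by positivity
  refine ⟨(hasProd_of_le_one _ (fun j => by linarith [h0 j])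
    (fun j => by linarith [h1 j])).multipliable.hasProd, ?_⟩
  apply tprod_one_sub_pos _ (fun j => (h1 j).le) h0
  apply ((summable_geometric_of_lt_one (show (0:ℝ) ≤ q^5 by positivity)
    (pow_lt_one₀ hq0.le hq1 (by omega))).mul_left (q^c)).congr
  intro j
  rw [← pow_mul, ← pow_add]
  congr 1
  omega

/-- The Legendre symbol modulo 5: `χ₅ n = 1` if `n ≡ ±1 (mod 5)`,
`χ₅ n = -1` if `n ≡ ±2 (mod 5)`, and `χ₅ n = 0` if `5 ∣ n`. -/
noncomputable def chi5 (n : ℕ) : ℝ :=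
  if n % 5 = 1 ∨ n % 5 = 4 then 1
  else if n % 5 = 2 ∨ n % 5 = 3 then -1
  else 0

/-- For `0 < q < 1`,
`∏_{n ≥ 1} (1 - q^n)^{χ₅(n)}
  = (∑_{n ∈ ℤ} (-1)^n q^{(5n²+3n)/2}) / (∑_{n ∈ ℤ} (-1)^n q^{(5n²+n)/2})`,
the denominator being nonzero (real powers of `q`, real-power exponents on
positive bases on the left). -/
theorem stmt13 (q : ℝ) (hq0 : 0 < q) (hq1 : q < 1) :
    (∑' n : ℤ, (-1 : ℝ) ^ n * q ^ ((5 * (n : ℝ) ^ 2 + (n : ℝ)) / 2)) ≠ 0 ∧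
    ∏' n : ℕ, (1 - q ^ (n + 1)) ^ (chi5 (n + 1)) =
      (∑' n : ℤ, (-1 : ℝ) ^ n * q ^ ((5 * (n : ℝ) ^ 2 + 3 * (n : ℝ)) / 2)) /
        (∑' n : ℤ, (-1 : ℝ) ^ n * q ^ ((5 * (n : ℝ) ^ 2 + (n : ℝ)) / 2)) := by
  classical
  set x : ℝ := q ^ ((5:ℝ)/2) with hxdef
  set w3 : ℝ := q ^ ((3:ℝ)/2) with hw3def
  set w1 : ℝ := q ^ ((1:ℝ)/2) with hw1def
  have hx0 : 0 < x := Real.rpow_pos_of_pos hq0 _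
  have hx1 : x < 1 := Real.rpow_lt_one hq0.le hq1 (by norm_num)
  have hw3 : 0 < w3 := Real.rpow_pos_of_pos hq0 _
  have hw1 : 0 < w1 := Real.rpow_pos_of_pos hq0 _
  have hq1' : ∀ y : ℝ, 0 < y → q ^ y < 1 := fun y hy => Real.rpow_lt_one hq0.le hq1 hy
  have hmul : ∀ a b : ℝ, q ^ a * q ^ b = q ^ (a + b) := fun a b =>
    (Real.rpow_add hq0 a b).symm
  have hinv : ∀ a : ℝ, (q ^ a)⁻¹ = q ^ (-a) := fun a => (Real.rpow_neg hq0.le a).symm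
  have h13 : x * w3 < 1 := by rw [hxdef, hw3def, hmul]; exact hq1' _ (by norm_num)
  have h13' : x * w3⁻¹ < 1 := by
    rw [hxdef, hw3def, hinv, hmul]; exact hq1' _ (by norm_num)
  have h11 : x * w1 < 1 := by rw [hxdef, hw1def, hmul]; exact hq1' _ (by norm_num)
  have h11' : x * w1⁻¹ < 1 := by
    rw [hxdef, hw1def, hinv, hmul]; exact hq1' _ (by norm_num)
  have hxpow : ∀ k : ℕ, x ^ k = q ^ ((5:ℝ)/2 * k) := fun k => by
    rw [← Real.rpow_natCast x k, hxdef, ← Real.rpow_mul hq0.le]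
  -- conversions of the product factors
  have hc5 : ∀ j : ℕ, x^(2*j+2) = q^(5*j+5) := by
    intro j
    rw [hxpow, ← Real.rpow_natCast q (5*j+5)]
    congr 1; push_cast; ring
  have hc4 : ∀ j : ℕ, x^(2*j+1) * w3 = q^(5*j+4) := by
    intro j
    rw [hxpow, hw3def, hmul, ← Real.rpow_natCast q (5*j+4)]
    congr 1; push_cast; ring
  have hc1 : ∀ j : ℕ, x^(2*j+1) * w3⁻¹ = q^(5*j+1) := by
    intro j
    rw [hxpow, hw3def, hinv, hmul, ← Real.rpow_natCast q (5*j+1)]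
    congr 1; push_cast; ring
  have hc3 : ∀ j : ℕ, x^(2*j+1) * w1 = q^(5*j+3) := by
    intro j
    rw [hxpow, hw1def, hmul, ← Real.rpow_natCast q (5*j+3)]
    congr 1; push_cast; ring
  have hc2 : ∀ j : ℕ, x^(2*j+1) * w1⁻¹ = q^(5*j+2) := by
    intro j
    rw [hxpow, hw1def, hinv, hmul, ← Real.rpow_natCast q (5*j+2)]
    congr 1; push_cast; ring
  -- Euler products
  obtain ⟨hE1, hE1pos⟩ := euler_facts q hq0 hq1 1 (by omega)
  obtain ⟨hE2, hE2pos⟩ := euler_facts q hq0 hq1 2 (by omega)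
  obtain ⟨hE3, hE3pos⟩ := euler_facts q hq0 hq1 3 (by omega)
  obtain ⟨hE4, hE4pos⟩ := euler_facts q hq0 hq1 4 (by omega)
  obtain ⟨hE5, hE5pos⟩ := euler_facts q hq0 hq1 5 (by omega)
  set E1 : ℝ := ∏' j : ℕ, (1 - q ^ (5*j+1)) with hE1def
  set E2 : ℝ := ∏' j : ℕ, (1 - q ^ (5*j+2)) with hE2def
  set E3 : ℝ := ∏' j : ℕ, (1 - q ^ (5*j+3)) with hE3def
  set E4 : ℝ := ∏' j : ℕ, (1 - q ^ (5*j+4)) with hE4def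
  set E5 : ℝ := ∏' j : ℕ, (1 - q ^ (5*j+5)) with hE5def
  -- sums via jtp
  have hsum3 : (∑' n : ℤ, (-1 : ℝ) ^ n * q ^ ((5 * (n : ℝ) ^ 2 + 3 * (n : ℝ)) / 2))
      = E5 * (E4 * E1) := by
    have hj := jtp_s13 hx0 hx1 hw3 h13 h13'
    have e5 : (∏' j : ℕ, (1 - x^(2*j+2))) = E5 :=
      tprod_congr (fun j => by rw [hc5 j])
    have e4 : (∏' j : ℕ, (1 - x^(2*j+1) * w3)) = E4 :=
      tprod_congr (fun j => by rw [hc4 j])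
    have e1 : (∏' j : ℕ, (1 - x^(2*j+1) * w3⁻¹)) = E1 :=
      tprod_congr (fun j => by rw [hc1 j])
    rw [e5, e4, e1] at hj
    rw [← hj]
    apply tsum_congr
    intro n
    congr 1
    rw [hxdef, hw3def, ← Real.rpow_intCast (q ^ ((5:ℝ)/2)) (n^2), ← Real.rpow_intCast (q ^ ((3:ℝ)/2)) n,
      ← Real.rpow_mul hq0.le, ← Real.rpow_mul hq0.le, hmul]
    congr 1; push_cast; ring
  have hsum1 : (∑' n : ℤ, (-1 : ℝ) ^ n * q ^ ((5 * (n : ℝ) ^ 2 + (n : ℝ)) / 2))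
      = E5 * (E3 * E2) := by
    have hj := jtp_s13 hx0 hx1 hw1 h11 h11'
    have e5 : (∏' j : ℕ, (1 - x^(2*j+2))) = E5 :=
      tprod_congr (fun j => by rw [hc5 j])
    have e3 : (∏' j : ℕ, (1 - x^(2*j+1) * w1)) = E3 :=
      tprod_congr (fun j => by rw [hc3 j])
    have e2 : (∏' j : ℕ, (1 - x^(2*j+1) * w1⁻¹)) = E2 :=
      tprod_congr (fun j => by rw [hc2 j])
    rw [e5, e3, e2] at hj
    rw [← hj]
    apply tsum_congr
    intro n
    congr 1
    rw [hxdef, hw1def, ← Real.rpow_intCast (q ^ ((5:ℝ)/2)) (n^2), ← Real.rpow_intCast (q ^ ((1:ℝ)/2)) n,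
      ← Real.rpow_mul hq0.le, ← Real.rpow_mul hq0.le, hmul]
    congr 1; push_cast; ring
  -- the chi5 product
  set f1 : ℕ → ℝ := fun n => if (n+1) % 5 = 1 then 1 - q^(n+1) else 1 with hf1def
  set f2 : ℕ → ℝ := fun n => if (n+1) % 5 = 2 then (1 - q^(n+1))⁻¹ else 1 with hf2def
  set f3 : ℕ → ℝ := fun n => if (n+1) % 5 = 3 then (1 - q^(n+1))⁻¹ else 1 with hf3def
  set f4 : ℕ → ℝ := fun n => if (n+1) % 5 = 4 then 1 - q^(n+1) else 1 with hf4def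
  have hP1 : HasProd f1 E1 := by
    apply (Function.Injective.hasProd_iff (g := fun j : ℕ => 5*j)
      (fun a b hab => by simp only [] at hab; omega) ?_).1
    · have he : (f1 ∘ fun j : ℕ => 5*j) = fun j : ℕ => 1 - q^(5*j+1) := by
        funext j
        simp only [hf1def, Function.comp]
        rw [if_pos (by omega : (5*j+1) % 5 = 1)]
      rw [he]; exact hE1
    · intro n hn
      simp only [hf1def]
      rw [if_neg]
      intro hmod
      exact hn ⟨n/5, by simp only []; omega⟩
  have hP4 : HasProd f4 E4 := by
    apply (Function.Injective.hasProd_iff (g := fun j : ℕ => 5*j+3)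
      (fun a b hab => by simp only [] at hab; omega) ?_).1
    · have he : (f4 ∘ fun j : ℕ => 5*j+3) = fun j : ℕ => 1 - q^(5*j+4) := by
        funext j
        simp only [hf4def, Function.comp]
        rw [show 5*j+3+1 = 5*j+4 from by omega, if_pos (by omega : (5*j+4) % 5 = 4)]
      rw [he]; exact hE4
    · intro n hn
      simp only [hf4def]
      rw [if_neg]
      intro hmod
      exact hn ⟨n/5, by simp only []; omega⟩
  have hP2 : HasProd f2 E2⁻¹ := by
    apply (Function.Injective.hasProd_iff (g := fun j : ℕ => 5*j+1)
      (fun a b hab => by simp only [] at hab; omega) ?_).1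
    · have he : (f2 ∘ fun j : ℕ => 5*j+1) = fun j : ℕ => (1 - q^(5*j+2))⁻¹ := by
        funext j
        simp only [hf2def, Function.comp]
        rw [show 5*j+1+1 = 5*j+2 from by omega, if_pos (by omega : (5*j+2) % 5 = 2)]
      rw [he]; exact hasProd_inv hE2 hE2pos.ne'
    · intro n hn
      simp only [hf2def]
      rw [if_neg]
      intro hmod
      exact hn ⟨n/5, by simp only []; omega⟩
  have hP3 : HasProd f3 E3⁻¹ := by
    apply (Function.Injective.hasProd_iff (g := fun j : ℕ => 5*j+2)
      (fun a b hab => by simp only [] at hab; omega) ?_).1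
    · have he : (f3 ∘ fun j : ℕ => 5*j+2) = fun j : ℕ => (1 - q^(5*j+3))⁻¹ := by
        funext j
        simp only [hf3def, Function.comp]
        rw [show 5*j+2+1 = 5*j+3 from by omega, if_pos (by omega : (5*j+3) % 5 = 3)]
      rw [he]; exact hasProd_inv hE3 hE3pos.ne'
    · intro n hn
      simp only [hf3def]
      rw [if_neg]
      intro hmod
      exact hn ⟨n/5, by simp only []; omega⟩
  have hTotal : HasProd (fun n => ((f1 n * f4 n) * f2 n) * f3 n)
      (((E1 * E4) * E2⁻¹) * E3⁻¹) := ((hP1.mul hP4).mul hP2).mul hP3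
  have hpoint : ∀ n : ℕ, (1 - q ^ (n + 1)) ^ (chi5 (n + 1))
      = ((f1 n * f4 n) * f2 n) * f3 n := by
    intro n
    have h5 : (n+1) % 5 = 0 ∨ (n+1) % 5 = 1 ∨ (n+1) % 5 = 2 ∨ (n+1) % 5 = 3
        ∨ (n+1) % 5 = 4 := by omega
    simp only [hf1def, hf2def, hf3def, hf4def]
    rcases h5 with h | h | h | h | h <;>
      simp [chi5, h, Real.rpow_one, Real.rpow_neg_one, Real.rpow_zero]
  have hLHS : (∏' n : ℕ, (1 - q ^ (n + 1)) ^ (chi5 (n + 1)))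
      = ((E1 * E4) * E2⁻¹) * E3⁻¹ := by
    rw [tprod_congr hpoint]
    exact hTotal.tprod_eq
  have hden_ne : E5 * (E3 * E2) ≠ 0 := by positivity
  constructor
  · rw [hsum1]; exact hden_ne
  · rw [hLHS, hsum3, hsum1]
    field_simp
end
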